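/- arXiv:2509.25925 — 3 statements merged into one kernel-verified Lean document; each statement's English description precedes it below -/
import Mathlib

section
/- For every t, q, s ≥ 1 and cycle lengths k_1, …, k_{t−1} ≥ 3, the graphs G_1 = K_1 ∨ (C_3 ∪ C_{k_1} ∪ C_{k_2} ∪ ⋯ ∪ C_{k_{t−1}} ∪ qK_2 ∪ sK_1) and G_2 = K_1 ∨ (K_{1,3} ∪ C_{k_1} ∪ C_{k_2} ∪ ⋯ ∪ C_{k_{t−1}} ∪ qK_2 ∪ (s−1)K_1) are Q-cospectral and non-isomorphic; in particular, G_1 is not determined by its signless Laplacian spectrum (not DQS). -/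
open SimpleGraph Finset

namespace Paper

/-- The cone `K₁ ∨ G`: a new apex vertex (`none`) joined to every vertex of `G`. -/
def cone {V : Type*} (G : SimpleGraph V) : SimpleGraph (Option V) where
  Adj x y :=
    match x, y with
    | none, none => False
    | none, some _ => True
    | some _, none => True
    | some a, some b => G.Adj a b
  symm := by
    constructor
    rintro (_ | a) (_ | b) h
    · exact h
    · exact trivial
    · exact trivial
    · exact G.adj_symm h
  loopless := by
    constructor
    rintro (_ | a) h
    · exact h
    · exact G.loopless.irrefl a h

/-- Disjoint union of an indexed family of graphs. -/
def sigmaGraph {ι : Type*} {V : ι → Type*} (G : ∀ i, SimpleGraph (V i)) :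
    SimpleGraph (Σ i, V i) where
  Adj x y := ∃ (i : ι) (u v : V i), x = ⟨i, u⟩ ∧ y = ⟨i, v⟩ ∧ (G i).Adj u v
  symm := by
    constructor
    rintro x y ⟨i, u, v, rfl, rfl, h⟩
    exact ⟨i, v, u, rfl, rfl, (G i).adj_symm h⟩
  loopless := by
    constructor
    rintro x ⟨i, u, v, rfl, h2, h⟩
    injection h2 with h3 h4
    subst h4
    exact (G i).loopless.irrefl u h

/-- `q` disjoint copies of `K₂`. -/
def K2s (q : ℕ) : SimpleGraph (Σ _ : Fin q, Fin 2) :=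
  sigmaGraph fun _ => (⊤ : SimpleGraph (Fin 2))

/-- The signless Laplacian matrix `Q(G) = D(G) + A(G)`. -/
noncomputable def QMatrix {V : Type*} [Fintype V] (G : SimpleGraph V) : Matrix V V ℝ :=
  letI := Classical.decEq V
  letI := Classical.decRel G.Adj
  Matrix.diagonal (fun v => (G.degree v : ℝ)) + G.adjMatrix ℝ

/-- The signless Laplacian spectrum, as the multiset of roots of the characteristic
polynomial of `Q(G)` (with multiplicity). -/
noncomputable def Qspectrum {V : Type*} [Fintype V] (G : SimpleGraph V) : Multiset ℝ :=
  letI := Classical.decEq V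
  (QMatrix G).charpoly.roots

/-- Multiplicity of `ρ` as a signless Laplacian eigenvalue of `G`. -/
noncomputable def Qmult {V : Type*} [Fintype V] (G : SimpleGraph V) (ρ : ℝ) : ℕ :=
  (Qspectrum G).count ρ

/-- The `i`-th largest signless Laplacian eigenvalue (1-indexed), i.e. `χ_i(G)`. -/
noncomputable def Qeig {V : Type*} [Fintype V] (G : SimpleGraph V) (i : ℕ) : ℝ :=
  (((Qspectrum G).sort (· ≤ ·)).reverse).getD (i - 1) 0

/-- `G` is determined by its signless Laplacian spectrum. -/
def IsDQS {V : Type*} [Fintype V] (G : SimpleGraph V) : Prop :=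
  ∀ (W : Type) [Fintype W] (F : SimpleGraph W),
    Qspectrum F = Qspectrum G → Nonempty (F ≃g G)

/-- The number of subgraphs of `G` isomorphic to `H`. -/
noncomputable def subgraphCount {V W : Type*} (G : SimpleGraph V) (H : SimpleGraph W) : ℕ :=
  Nat.card {H' : G.Subgraph // Nonempty (H'.coe ≃g H)}

/-- The number of triangle subgraphs of `G` containing a vertex `v`. -/
noncomputable def triangleCountAt {V : Type*} (G : SimpleGraph V) (v : V) : ℕ :=
  Nat.card {H' : G.Subgraph //
    v ∈ H'.verts ∧ Nonempty (H'.coe ≃g (⊤ : SimpleGraph (Fin 3)))}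

/-- Vertex degree (with classical decidability). -/
noncomputable def deg {V : Type*} [Fintype V] (G : SimpleGraph V) (v : V) : ℕ :=
  letI := Classical.decRel G.Adj
  G.degree v

/-- The multiset of vertex degrees of `G`. -/
noncomputable def degreeMultiset {V : Type*} [Fintype V] (G : SimpleGraph V) : Multiset ℕ :=
  (Finset.univ : Finset V).val.map fun v => deg G v

/-- The maximum vertex degree of `G`. -/
noncomputable def maxDeg {V : Type*} [Fintype V] (G : SimpleGraph V) : ℕ :=
  letI := Classical.decRel G.Adj
  G.maxDegree

/-- `S_r(G) = trace(A(G)^r)`, the `r`-th spectral moment. -/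
noncomputable def Smoment {V : Type*} [Fintype V] (G : SimpleGraph V) (r : ℕ) : ℝ :=
  letI := Classical.decEq V
  letI := Classical.decRel G.Adj
  ((G.adjMatrix ℝ) ^ r).trace

/-- `T_r(G) = trace(Q(G)^r)`, the `r`-th signless Laplacian spectral moment. -/
noncomputable def Tmoment {V : Type*} [Fintype V] (G : SimpleGraph V) (r : ℕ) : ℝ :=
  letI := Classical.decEq V
  ((QMatrix G) ^ r).trace

/-- `∑_{uv ∈ E(G)} d_G(u) d_G(v)`. -/
noncomputable def edgeDegSum {V : Type*} [Fintype V] (G : SimpleGraph V) : ℕ :=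
  letI := Classical.decEq V
  letI := Classical.decRel G.Adj
  ∑ e ∈ G.edgeFinset,
    Sym2.lift ⟨fun u v => G.degree u * G.degree v, fun _ _ => Nat.mul_comm _ _⟩ e

/-- The coalescence of `G` at `v` with the apex of `K₁ ∨ r K₂`: add `2r` new vertices
`a_i, b_i` and edges `a_i b_i`, `v a_i`, `v b_i`. -/
def coalescenceK2s {V : Type*} (G : SimpleGraph V) (v : V) (r : ℕ) :
    SimpleGraph (V ⊕ (Fin r × Fin 2)) where
  Adj x y :=
    match x, y with
    | Sum.inl a, Sum.inl b => G.Adj a b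
    | Sum.inl a, Sum.inr _ => a = v
    | Sum.inr _, Sum.inl b => b = v
    | Sum.inr p, Sum.inr p' => p.1 = p'.1 ∧ p.2 ≠ p'.2
  symm := by
    constructor
    rintro (a | p) (b | p') h
    · exact G.adj_symm h
    · exact h
    · exact h
    · exact ⟨h.1.symm, h.2.symm⟩
  loopless := by
    constructor
    rintro (a | p) h
    · exact G.loopless.irrefl a h
    · exact h.2 rfl


/-- `K₁ ∨ (C_{k 0} ∪ ⋯ ∪ C_{k (t-1)} ∪ q K₂ ∪ s K₁)`. -/
def coneCycles {t : ℕ} (k : Fin t → ℕ) (q s : ℕ) :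
    SimpleGraph (Option ((Σ i, Fin (k i)) ⊕ ((Σ _ : Fin q, Fin 2) ⊕ Fin s))) :=
  cone ((sigmaGraph fun i => cycleGraph (k i)) ⊕g (K2s q ⊕g (⊥ : SimpleGraph (Fin s))))

/-- `K₁ ∨ (C_k ∪ q K₂ ∪ s K₁)`. -/
def coneOneCycle (k q s : ℕ) :
    SimpleGraph (Option (Fin k ⊕ ((Σ _ : Fin q, Fin 2) ⊕ Fin s))) :=
  cone (cycleGraph k ⊕g (K2s q ⊕g (⊥ : SimpleGraph (Fin s))))

/-- `K₁ ∨ (C₄ ∪ P_{k-3} ∪ P₃ ∪ (q-2) K₂ ∪ s K₁)`. -/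
def coneAlt (k q s : ℕ) :
    SimpleGraph (Option (Fin 4 ⊕ (Fin (k - 3) ⊕ (Fin 3 ⊕ ((Σ _ : Fin (q - 2), Fin 2) ⊕ Fin s))))) :=
  cone (cycleGraph 4 ⊕g (pathGraph (k - 3) ⊕g (pathGraph 3 ⊕g
    (K2s (q - 2) ⊕g (⊥ : SimpleGraph (Fin s))))))

/-- `K₁ ∨ (C₃ ∪ C_{k 0} ∪ ⋯ ∪ C_{k (t'-1)} ∪ q K₂ ∪ s K₁)`. -/
def coneC3Cycles {t' : ℕ} (k : Fin t' → ℕ) (q s : ℕ) :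
    SimpleGraph (Option (Fin 3 ⊕ ((Σ i, Fin (k i)) ⊕ ((Σ _ : Fin q, Fin 2) ⊕ Fin s)))) :=
  cone (cycleGraph 3 ⊕g ((sigmaGraph fun i => cycleGraph (k i)) ⊕g
    (K2s q ⊕g (⊥ : SimpleGraph (Fin s)))))

/-- `K₁ ∨ (K_{1,3} ∪ C_{k 0} ∪ ⋯ ∪ C_{k (t'-1)} ∪ q K₂ ∪ s' K₁)`. -/
def coneStar {t' : ℕ} (k : Fin t' → ℕ) (q s' : ℕ) :
    SimpleGraph (Option ((Fin 1 ⊕ Fin 3) ⊕ ((Σ i, Fin (k i)) ⊕ ((Σ _ : Fin q, Fin 2) ⊕ Fin s')))) :=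
  cone (completeBipartiteGraph (Fin 1) (Fin 3) ⊕g ((sigmaGraph fun i => cycleGraph (k i)) ⊕g
    (K2s q ⊕g (⊥ : SimpleGraph (Fin s')))))

/-- `K₁ ∨ (P_{l 0} ∪ ⋯ ∪ P_{l (q-1)} ∪ s K₁)`. -/
def conePaths {q : ℕ} (l : Fin q → ℕ) (s : ℕ) :
    SimpleGraph (Option ((Σ i, Fin (l i)) ⊕ Fin s)) :=
  cone ((sigmaGraph fun i => pathGraph (l i)) ⊕g (⊥ : SimpleGraph (Fin s)))

/-- `K₁ ∨ (C_{k 0} ∪ ⋯ ∪ C_{k (z-1)} ∪ P_{l 0} ∪ ⋯ ∪ P_{l (q-1)} ∪ s K₁)`. -/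
def coneCyclesPaths {z q : ℕ} (k : Fin z → ℕ) (l : Fin q → ℕ) (s : ℕ) :
    SimpleGraph (Option ((Σ i, Fin (k i)) ⊕ ((Σ i, Fin (l i)) ⊕ Fin s))) :=
  cone ((sigmaGraph fun i => cycleGraph (k i)) ⊕g
    ((sigmaGraph fun i => pathGraph (l i)) ⊕g (⊥ : SimpleGraph (Fin s))))

/-- The quartic polynomial `p_{n,q,s}` from the paper. -/
noncomputable def quartic (n q s : ℕ) (x : ℝ) : ℝ :=
  x ^ 4 - ((n : ℝ) + 8) * x ^ 3 + (8 * (n : ℝ) + 15) * x ^ 2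
    + (4 * (q : ℝ) + 4 * (s : ℝ) - 19 * (n : ℝ) + 4) * x
    + (12 * (n : ℝ) - 4 * (q : ℝ) - 12 * (s : ℝ) - 12)

/-- The multiset `{3 + 2 cos (2jπ/k_i) : 1 ≤ j ≤ k_i - 1, 1 ≤ i ≤ t}`. -/
noncomputable def cycleEigs {t : ℕ} (k : Fin t → ℕ) : Multiset ℝ :=
  ∑ i : Fin t, (Multiset.range (k i - 1)).map
    (fun j => 3 + 2 * Real.cos (2 * ((j : ℝ) + 1) * Real.pi / (k i : ℝ)))


section Helpers
open Classical in
/-- degree as a sum of indicators -/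
lemma deg_eq_sum {V : Type*} [Fintype V] (G : SimpleGraph V) (v : V) :
    deg G v = ∑ w, if G.Adj v w then 1 else 0 := by
  classical
  unfold deg
  rw [SimpleGraph.degree, SimpleGraph.neighborFinset_eq_filter, Finset.card_filter]

@[simp] lemma cone_adj_none_some {V : Type*} (G : SimpleGraph V) (v : V) :
    (cone G).Adj none (some v) := trivial
@[simp] lemma cone_adj_some_none {V : Type*} (G : SimpleGraph V) (v : V) :
    (cone G).Adj (some v) none := trivial
@[simp] lemma cone_adj_some_some {V : Type*} (G : SimpleGraph V) (v w : V) :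
    (cone G).Adj (some v) (some w) ↔ G.Adj v w := Iff.rfl
@[simp] lemma cone_adj_none_none {V : Type*} (G : SimpleGraph V) :
    ¬ (cone G).Adj none none := id

lemma deg_cone_none {V : Type*} [Fintype V] (G : SimpleGraph V) :
    deg (cone G) none = Fintype.card V := by
  classical
  rw [deg_eq_sum, Fintype.sum_option]
  simp

lemma deg_cone_some {V : Type*} [Fintype V] (G : SimpleGraph V) (v : V) :
    deg (cone G) (some v) = deg G v + 1 := by
  classical
  rw [deg_eq_sum, Fintype.sum_option, deg_eq_sum]
  simp [add_comm]

lemma deg_sum_inl {V W : Type*} [Fintype V] [Fintype W] (G : SimpleGraph V)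
    (H : SimpleGraph W) (v : V) : deg (G ⊕g H) (Sum.inl v) = deg G v := by
  classical
  rw [deg_eq_sum, Fintype.sum_sum_type, deg_eq_sum]
  simp

lemma deg_sum_inr {V W : Type*} [Fintype V] [Fintype W] (G : SimpleGraph V)
    (H : SimpleGraph W) (w : W) : deg (G ⊕g H) (Sum.inr w) = deg H w := by
  classical
  rw [deg_eq_sum, Fintype.sum_sum_type, deg_eq_sum]
  simp

lemma sigmaGraph_adj_same {ι : Type*} {Vf : ι → Type*} (G : ∀ i, SimpleGraph (Vf i))
    (i : ι) (u v : Vf i) : (sigmaGraph G).Adj ⟨i, u⟩ ⟨i, v⟩ ↔ (G i).Adj u v := by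
  constructor
  · rintro ⟨j, a, b, h1, h2, h⟩
    obtain ⟨rfl, h1'⟩ := Sigma.mk.inj_iff.mp h1
    obtain ⟨-, h2'⟩ := Sigma.mk.inj_iff.mp h2
    rw [eq_of_heq h1', eq_of_heq h2']
    exact h
  · intro h
    exact ⟨i, u, v, rfl, rfl, h⟩

lemma sigmaGraph_adj_ne {ι : Type*} {Vf : ι → Type*} (G : ∀ i, SimpleGraph (Vf i))
    {i j : ι} (hij : i ≠ j) (u : Vf i) (v : Vf j) :
    ¬ (sigmaGraph G).Adj ⟨i, u⟩ ⟨j, v⟩ := by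
  rintro ⟨l, a, b, h1, h2, h⟩
  obtain ⟨rfl, -⟩ := Sigma.mk.inj_iff.mp h1
  obtain ⟨rfl, -⟩ := Sigma.mk.inj_iff.mp h2
  exact hij rfl

lemma deg_sigma {ι : Type*} [Fintype ι] {Vf : ι → Type*} [∀ i, Fintype (Vf i)]
    (G : ∀ i, SimpleGraph (Vf i)) (i : ι) (u : Vf i) :
    deg (sigmaGraph G) ⟨i, u⟩ = deg (G i) u := by
  classical
  rw [deg_eq_sum, deg_eq_sum, ← Finset.univ_sigma_univ, Finset.sum_sigma]
  rw [Finset.sum_eq_single i]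
  · exact Finset.sum_congr rfl fun v _ => by
      by_cases h : (G i).Adj u v
      · rw [if_pos ((sigmaGraph_adj_same G i u v).mpr h), if_pos h]
      · rw [if_neg (fun hc => h ((sigmaGraph_adj_same G i u v).mp hc)), if_neg h]
  · intro j _ hj
    exact Finset.sum_eq_zero fun v _ => by
      rw [if_neg (sigmaGraph_adj_ne G (fun hc => hj hc.symm) u v)]
  · simp

lemma deg_eq_degree {V : Type*} [Fintype V] (G : SimpleGraph V)
    [DecidableRel G.Adj] (v : V) : deg G v = G.degree v := by
  unfold deg
  congr!

lemma deg_cycle {n : ℕ} (hn : 3 ≤ n) (v : Fin n) : deg (cycleGraph n) v = 2 := by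
  obtain ⟨m, rfl⟩ : ∃ m, n = m + 3 := ⟨n - 3, by omega⟩
  rw [deg_eq_degree]
  exact SimpleGraph.cycleGraph_degree_three_le

lemma deg_bot {V : Type*} [Fintype V] (v : V) : deg (⊥ : SimpleGraph V) v = 0 := by
  classical
  rw [deg_eq_sum]
  simp

lemma deg_top_fin2 (v : Fin 2) : deg (⊤ : SimpleGraph (Fin 2)) v = 1 := by
  rw [deg_eq_degree]
  revert v
  decide

lemma deg_K2s (q : ℕ) (x : Σ _ : Fin q, Fin 2) : deg (K2s q) x = 1 := by
  obtain ⟨j, p⟩ := x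
  rw [K2s, deg_sigma]
  exact deg_top_fin2 p

lemma deg_CB_inl (c : Fin 1) :
    deg (completeBipartiteGraph (Fin 1) (Fin 3)) (Sum.inl c) = 3 := by
  classical
  rw [deg_eq_sum, Fintype.sum_sum_type]
  simp

lemma deg_CB_inr (c : Fin 3) :
    deg (completeBipartiteGraph (Fin 1) (Fin 3)) (Sum.inr c) = 1 := by
  classical
  rw [deg_eq_sum, Fintype.sum_sum_type]
  simp

lemma QMatrix_apply_diag {V : Type*} [Fintype V] (G : SimpleGraph V) (v : V) :
    QMatrix G v v = (deg G v : ℝ) := by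
  letI := Classical.decEq V
  letI := Classical.decRel G.Adj
  unfold QMatrix deg
  rw [Matrix.add_apply, Matrix.diagonal_apply_eq, SimpleGraph.adjMatrix_apply,
    if_neg (G.loopless.irrefl v), add_zero]

lemma QMatrix_apply_adj {V : Type*} [Fintype V] (G : SimpleGraph V) {v w : V}
    (h : G.Adj v w) : QMatrix G v w = 1 := by
  letI := Classical.decEq V
  letI := Classical.decRel G.Adj
  unfold QMatrix
  rw [Matrix.add_apply, Matrix.diagonal_apply_ne _ h.ne, SimpleGraph.adjMatrix_apply,
    if_pos h, zero_add]

lemma QMatrix_apply_zero {V : Type*} [Fintype V] (G : SimpleGraph V) {v w : V}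
    (hne : v ≠ w) (h : ¬ G.Adj v w) : QMatrix G v w = 0 := by
  letI := Classical.decEq V
  letI := Classical.decRel G.Adj
  unfold QMatrix
  rw [Matrix.add_apply, Matrix.diagonal_apply_ne _ hne, SimpleGraph.adjMatrix_apply,
    if_neg h, zero_add]


@[simp] lemma last_ne_castSucc {n : ℕ} (m : Fin n) : Fin.last n ≠ m.castSucc :=
  (Fin.castSucc_lt_last m).ne'

lemma QMatrix_symm {V : Type*} [Fintype V] (G : SimpleGraph V) (x y : V) :
    QMatrix G x y = QMatrix G y x := by
  by_cases hxy : x = y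
  · subst hxy; rfl
  · by_cases hadj : G.Adj x y
    · rw [QMatrix_apply_adj _ hadj, QMatrix_apply_adj _ hadj.symm]
    · rw [QMatrix_apply_zero _ hxy hadj,
        QMatrix_apply_zero _ (Ne.symm hxy) (fun hc => hadj hc.symm)]

lemma QMatrix_cone_none_none {V : Type*} [Fintype V] (G : SimpleGraph V) :
    QMatrix (cone G) none none = (Fintype.card V : ℝ) := by
  rw [QMatrix_apply_diag, deg_cone_none]

lemma QMatrix_cone_none_some {V : Type*} [Fintype V] (G : SimpleGraph V) (v : V) :
    QMatrix (cone G) none (some v) = 1 :=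
  QMatrix_apply_adj _ (cone_adj_none_some G v)

lemma QMatrix_cone_some_none {V : Type*} [Fintype V] (G : SimpleGraph V) (v : V) :
    QMatrix (cone G) (some v) none = 1 :=
  QMatrix_apply_adj _ (cone_adj_some_none G v)

end Helpers


section Spectral

lemma charpoly_conj {n : Type*} [Fintype n] [DecidableEq n] (P M : Matrix n n ℝ)
    (h : P * P = 1) : (P * M * P).charpoly = M.charpoly := by
  have hmap : (P.map Polynomial.C) * (P.map Polynomial.C) = 1 := by
    rw [← Matrix.map_mul, h]
    exact Matrix.map_one _ (map_zero _) (map_one _)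
  have key : Matrix.charmatrix (P * M * P) =
      P.map Polynomial.C * Matrix.charmatrix M * P.map Polynomial.C := by
    unfold Matrix.charmatrix
    have hsc : ∀ N : Matrix n n (Polynomial ℝ),
        Matrix.scalar n (Polynomial.X : Polynomial ℝ) * N
          = N * Matrix.scalar n (Polynomial.X : Polynomial ℝ) :=
      fun N => (Matrix.scalar_commute _ (fun r' => Commute.all _ _) N).eq
    rw [mul_sub, sub_mul]
    congr 1
    · rw [← hsc, mul_assoc, hmap, mul_one]
    · simp only [RingHom.mapMatrix_apply]
      rw [← Matrix.map_mul, ← Matrix.map_mul]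
  rw [Matrix.charpoly, Matrix.charpoly, key, Matrix.det_mul, Matrix.det_mul]
  rw [mul_comm, ← mul_assoc, ← Matrix.det_mul, hmap, Matrix.det_one, one_mul]

lemma deg_iso {V W : Type*} [Fintype V] [Fintype W] {F : SimpleGraph V}
    {G : SimpleGraph W} (φ : F ≃g G) (v : V) : deg G (φ v) = deg F v := by
  classical
  rw [deg_eq_sum, deg_eq_sum]
  exact (Fintype.sum_equiv φ.toEquiv
    (fun w => if F.Adj v w then (1:ℕ) else 0)
    (fun w => if G.Adj (φ v) w then (1:ℕ) else 0)
    (fun w => by simp [SimpleGraph.Iso.map_adj_iff])).symm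

lemma QMatrix_iso {V W : Type*} [Fintype V] [Fintype W] {F : SimpleGraph V}
    {G : SimpleGraph W} (φ : F ≃g G) :
    QMatrix F = (QMatrix G).submatrix φ φ := by
  ext x y
  rw [Matrix.submatrix_apply]
  by_cases hxy : x = y
  · subst hxy
    rw [QMatrix_apply_diag, QMatrix_apply_diag, deg_iso φ]
  · by_cases hadj : F.Adj x y
    · rw [QMatrix_apply_adj _ hadj, QMatrix_apply_adj _ (φ.map_adj_iff.mpr hadj)]
    · rw [QMatrix_apply_zero _ hxy hadj]
      exact (QMatrix_apply_zero G
        (fun hc => hxy (φ.toEquiv.injective hc))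
        (fun hc => hadj (φ.map_adj_iff.mp hc))).symm

lemma Qspectrum_iso {V W : Type*} [Fintype V] [Fintype W] {F : SimpleGraph V}
    {G : SimpleGraph W} (φ : F ≃g G) : Qspectrum F = Qspectrum G := by
  classical
  unfold Qspectrum
  congr 1
  have : QMatrix F = Matrix.reindex φ.toEquiv.symm φ.toEquiv.symm (QMatrix G) := by
    rw [Matrix.reindex_apply, Equiv.symm_symm, QMatrix_iso φ]
    rfl
  rw [this]
  exact Matrix.charpoly_reindex _ _

end Spectral


section Construction

variable {t' : ℕ} (k : Fin t' → ℕ) (q s' : ℕ)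

/-- the common "rest" (non-local) part of the two vertex sets -/
abbrev Rt := ((Σ i, Fin (k i)) ⊕ ((Σ _ : Fin q, Fin 2) ⊕ Fin s'))

abbrev Bc3 := Fin 3 ⊕ ((Σ i, Fin (k i)) ⊕ ((Σ _ : Fin q, Fin 2) ⊕ Fin (s' + 1)))

abbrev Bst := (Fin 1 ⊕ Fin 3) ⊕ Rt k q s'

def shiftR : Rt k q s' → ((Σ i, Fin (k i)) ⊕ ((Σ _ : Fin q, Fin 2) ⊕ Fin (s' + 1))) :=
  Sum.map id (Sum.map id Fin.castSucc)

def fB : Bst k q s' → Bc3 k q s'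
  | .inl (.inl _) => .inr (.inr (.inr (Fin.last s')))
  | .inl (.inr i) => .inl i
  | .inr r => .inr (shiftR k q s' r)

def fBinv : Bc3 k q s' → Bst k q s'
  | .inl i => .inl (.inr i)
  | .inr (.inl x) => .inr (.inl x)
  | .inr (.inr (.inl x)) => .inr (.inr (.inl x))
  | .inr (.inr (.inr j)) =>
      Fin.lastCases (.inl (.inl 0)) (fun m => .inr (.inr (.inr m))) j

def eB : Bst k q s' ≃ Bc3 k q s' where
  toFun := fB k q s'
  invFun := fBinv k q s'
  left_inv := by
    rintro ((c | i) | (x | (x | m))) <;>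
      simp [fB, fBinv, shiftR, Fin.lastCases_last, Fin.lastCases_castSucc]
    exact Subsingleton.elim _ _
  right_inv := by
    rintro (i | (x | (x | j)))
    · rfl
    · rfl
    · rfl
    · induction j using Fin.lastCases with
      | last => simp [fB, fBinv, Fin.lastCases_last]
      | cast m => simp [fB, fBinv, shiftR, Fin.lastCases_castSucc]

/-- the vertex equivalence between the two cones -/
def eW : Option (Bst k q s') ≃ Option (Bc3 k q s') :=
  Equiv.optionCongr (eB k q s')


/-- the four "local" vertices in the star cone: centre, three leaves -/
def locS : Fin 4 → Option (Bst k q s')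
  | 0 => some (.inl (.inl 0))
  | 1 => some (.inl (.inr 0))
  | 2 => some (.inl (.inr 1))
  | 3 => some (.inl (.inr 2))

/-- the orthogonal symmetric matrix (as a `Fin 4` table) -/
noncomputable def Uent : Fin 4 → Fin 4 → ℝ := fun i j =>
  if i = 0 then (if j = 0 then -(1/2) else 1/2)
  else if j = 0 then 1/2
  else if i = j then 5/6 else -(1/6)

noncomputable def cent : Fin 4 → Fin 4 → ℝ := fun i j =>
  Uent i j - if i = j then 1 else 0

/-- the local Q-block of the triangle cone, in the order w, a, b, c -/
noncomputable def B1ent : Fin 4 → Fin 4 → ℝ := fun i j =>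
  if i = 0 then (if j = 0 then 1 else 0)
  else if j = 0 then 0
  else if i = j then 3 else 1

/-- the local Q-block of the star cone, in the order u, x, y, z -/
noncomputable def B2ent : Fin 4 → Fin 4 → ℝ := fun i j =>
  if i = 0 then (if j = 0 then 4 else 1)
  else if j = 0 then 1
  else if i = j then 2 else 0

open Classical in
/-- the conjugating matrix -/
noncomputable def Pmat : Matrix (Option (Bst k q s')) (Option (Bst k q s')) ℝ :=
  1 + ∑ i, ∑ j, Matrix.single (locS k q s' i) (locS k q s' j) (cent i j)

open Classical in
lemma Pmat_mul_apply (M : Matrix (Option (Bst k q s')) (Option (Bst k q s')) ℝ)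
    (x y : Option (Bst k q s')) :
    (Pmat k q s' * M) x y = M x y +
      ∑ i, ∑ j, (if x = locS k q s' i then cent i j * M (locS k q s' j) y else 0) := by
  rw [Pmat, add_mul, one_mul, Matrix.add_apply]
  congr 1
  rw [Finset.sum_mul, Matrix.sum_apply]
  refine Finset.sum_congr rfl fun i _ => ?_
  rw [Finset.sum_mul, Matrix.sum_apply]
  refine Finset.sum_congr rfl fun j _ => ?_
  by_cases hx : x = locS k q s' i
  · subst hx
    rw [if_pos rfl, Matrix.single_mul_apply_same]
  · rw [if_neg hx, Matrix.single_mul_apply_of_ne _ _ _ x y hx]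

open Classical in
lemma mul_Pmat_apply (M : Matrix (Option (Bst k q s')) (Option (Bst k q s')) ℝ)
    (x y : Option (Bst k q s')) :
    (M * Pmat k q s') x y = M x y +
      ∑ i, ∑ j, (if y = locS k q s' j then M x (locS k q s' i) * cent i j else 0) := by
  rw [Pmat, mul_add, mul_one, Matrix.add_apply]
  congr 1
  rw [Finset.mul_sum, Matrix.sum_apply]
  refine Finset.sum_congr rfl fun i _ => ?_
  rw [Finset.mul_sum, Matrix.sum_apply]
  refine Finset.sum_congr rfl fun j _ => ?_
  by_cases hy : y = locS k q s' j
  · subst hy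
    rw [if_pos rfl, Matrix.mul_single_apply_same]
  · rw [if_neg hy, Matrix.mul_single_apply_of_ne _ _ _ x y hy]

end Construction


section EntryFacts

variable {t' : ℕ} (k : Fin t' → ℕ) (q s' : ℕ) (hk : ∀ i, 3 ≤ k i)

@[simp] lemma shiftR_cyc (x : Σ i, Fin (k i)) : shiftR k q s' (.inl x) = .inl x := rfl
@[simp] lemma shiftR_k2 (x : Σ _ : Fin q, Fin 2) : shiftR k q s' (.inr (.inl x)) = .inr (.inl x) := rfl
@[simp] lemma shiftR_k1 (m : Fin s') : shiftR k q s' (.inr (.inr m)) = .inr (.inr m.castSucc) := rfl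

lemma shiftR_injective : Function.Injective (shiftR k q s') :=
  Function.Injective.sumMap Function.injective_id
    (Function.Injective.sumMap Function.injective_id (Fin.castSucc_injective _))

set_option maxHeartbeats 2000000 in
omit hk in
lemma deg_rest_eq (r : Rt k q s') :
    deg (cycleGraph 3 ⊕g ((sigmaGraph fun i => cycleGraph (k i)) ⊕g
        (K2s q ⊕g (⊥ : SimpleGraph (Fin (s' + 1)))))) (.inr (shiftR k q s' r)) =
    deg (completeBipartiteGraph (Fin 1) (Fin 3) ⊕g ((sigmaGraph fun i => cycleGraph (k i)) ⊕g
        (K2s q ⊕g (⊥ : SimpleGraph (Fin s'))))) (.inr r) := by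
  rcases r with (⟨i, u⟩ | (x | m))
  · rw [shiftR_cyc, deg_sum_inr, deg_sum_inr, deg_sum_inl, deg_sum_inl, deg_sigma]
  · rw [shiftR_k2, deg_sum_inr, deg_sum_inr, deg_sum_inr, deg_sum_inr, deg_sum_inl, deg_sum_inl, deg_K2s]
  · rw [shiftR_k1, deg_sum_inr, deg_sum_inr, deg_sum_inr, deg_sum_inr, deg_sum_inr, deg_sum_inr, deg_bot, deg_bot]

set_option maxHeartbeats 2000000 in
lemma adj_rest_iff (r r' : Rt k q s') :
    (cycleGraph 3 ⊕g ((sigmaGraph fun i => cycleGraph (k i)) ⊕g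
        (K2s q ⊕g (⊥ : SimpleGraph (Fin (s' + 1)))))).Adj
        (.inr (shiftR k q s' r)) (.inr (shiftR k q s' r')) ↔
    (completeBipartiteGraph (Fin 1) (Fin 3) ⊕g ((sigmaGraph fun i => cycleGraph (k i)) ⊕g
        (K2s q ⊕g (⊥ : SimpleGraph (Fin s'))))).Adj (.inr r) (.inr r') := by
  rcases r with (a | (a | a)) <;> rcases r' with (b | (b | b)) <;>
    simp [shiftR, SimpleGraph.sum_adj]

set_option maxHeartbeats 2000000 in
omit hk in
lemma entry_rest (x y : Option (Rt k q s')) :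
    QMatrix (coneC3Cycles k q (s' + 1))
      (Option.map (Sum.inr ∘ shiftR k q s') x) (Option.map (Sum.inr ∘ shiftR k q s') y) =
    QMatrix (coneStar k q s') (Option.map Sum.inr x) (Option.map Sum.inr y) := by
  unfold coneC3Cycles coneStar
  rcases x with _ | r <;> rcases y with _ | r' <;>
    simp only [Option.map_none, Option.map_some, Function.comp_apply]
  · rw [QMatrix_cone_none_none, QMatrix_cone_none_none]
    have h1 : Fintype.card (Bc3 k q s') =
        3 + (Fintype.card (Σ i, Fin (k i)) + (Fintype.card (Σ _ : Fin q, Fin 2) + (s' + 1))) := by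
      simp [Fintype.card_sum]
    have h2 : Fintype.card (Bst k q s') =
        (1 + 3) + (Fintype.card (Σ i, Fin (k i)) + (Fintype.card (Σ _ : Fin q, Fin 2) + s')) := by
      simp [Fintype.card_sum]
    rw [h1, h2]
    push_cast
    ring
  · rw [QMatrix_cone_none_some, QMatrix_cone_none_some]
  · rw [QMatrix_cone_some_none, QMatrix_cone_some_none]
  · by_cases hrr : r = r'
    · subst hrr
      rw [QMatrix_apply_diag, QMatrix_apply_diag,
        deg_cone_some, deg_cone_some, deg_rest_eq k q s' r]
    · have hne1 : (Sum.inr (shiftR k q s' r) : Bc3 k q s') ≠ Sum.inr (shiftR k q s' r') :=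
        fun hc => hrr (shiftR_injective k q s' (Sum.inr_injective hc))
      by_cases hadj : (completeBipartiteGraph (Fin 1) (Fin 3) ⊕g
          ((sigmaGraph fun i => cycleGraph (k i)) ⊕g
          (K2s q ⊕g (⊥ : SimpleGraph (Fin s'))))).Adj (.inr r) (.inr r')
      · rw [QMatrix_apply_adj _ ((cone_adj_some_some _ _ _).mpr
            ((adj_rest_iff k q s' r r').mpr hadj)),
          QMatrix_apply_adj _ ((cone_adj_some_some _ _ _).mpr hadj)]
      · rw [QMatrix_apply_zero _ (fun hc => hrr (Sum.inr_injective (Option.some_injective _ hc)))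
            (fun hc => hadj ((cone_adj_some_some _ _ _).mp hc)),
          QMatrix_apply_zero _ (fun hc => hne1 (Option.some_injective _ hc))
            (fun hc => hadj ((adj_rest_iff k q s' r r').mp ((cone_adj_some_some _ _ _).mp hc)))]

@[simp] lemma eW_locS_0 : eW k q s' (locS k q s' 0) =
    some (.inr (.inr (.inr (Fin.last s')))) := rfl
@[simp] lemma eW_locS_1 : eW k q s' (locS k q s' 1) = some (.inl 0) := rfl
@[simp] lemma eW_locS_2 : eW k q s' (locS k q s' 2) = some (.inl 1) := rfl
@[simp] lemma eW_locS_3 : eW k q s' (locS k q s' 3) = some (.inl 2) := rfl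

set_option maxHeartbeats 2000000 in
omit hk in
lemma block1 (i j : Fin 4) :
    QMatrix (coneC3Cycles k q (s' + 1)) (eW k q s' (locS k q s' i))
      (eW k q s' (locS k q s' j)) = B1ent i j := by
  unfold coneC3Cycles
  have F1 : QMatrix (cone (cycleGraph 3 ⊕g ((sigmaGraph fun i => cycleGraph (k i)) ⊕g
      (K2s q ⊕g (⊥ : SimpleGraph (Fin (s' + 1)))))))
      (some (.inr (.inr (.inr (Fin.last s'))))) (some (.inr (.inr (.inr (Fin.last s'))))) = 1 := by
    rw [QMatrix_apply_diag, deg_cone_some, deg_sum_inr, deg_sum_inr, deg_sum_inr, deg_bot]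
    norm_num
  have F2 : ∀ a : Fin 3, QMatrix (cone (cycleGraph 3 ⊕g ((sigmaGraph fun i => cycleGraph (k i)) ⊕g
      (K2s q ⊕g (⊥ : SimpleGraph (Fin (s' + 1)))))))
      (some (.inl a)) (some (.inl a)) = 3 := by
    intro a
    rw [QMatrix_apply_diag, deg_cone_some, deg_sum_inl, deg_cycle (by norm_num)]
    norm_num
  have F3 : ∀ a b : Fin 3, a ≠ b → QMatrix (cone (cycleGraph 3 ⊕g
      ((sigmaGraph fun i => cycleGraph (k i)) ⊕g
      (K2s q ⊕g (⊥ : SimpleGraph (Fin (s' + 1)))))))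
      (some (.inl a)) (some (.inl b)) = 1 := by
    intro a b h
    exact QMatrix_apply_adj _ ((cone_adj_some_some _ _ _).mpr
      (by simpa [SimpleGraph.sum_adj, SimpleGraph.cycleGraph_three_eq_top] using h))
  have F4 : ∀ a : Fin 3, QMatrix (cone (cycleGraph 3 ⊕g
      ((sigmaGraph fun i => cycleGraph (k i)) ⊕g
      (K2s q ⊕g (⊥ : SimpleGraph (Fin (s' + 1)))))))
      (some (.inl a)) (some (.inr (.inr (.inr (Fin.last s'))))) = 0 := by
    intro a
    exact QMatrix_apply_zero _ (by simp) (by simp [SimpleGraph.sum_adj])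
  have F4' : ∀ a : Fin 3, QMatrix (cone (cycleGraph 3 ⊕g
      ((sigmaGraph fun i => cycleGraph (k i)) ⊕g
      (K2s q ⊕g (⊥ : SimpleGraph (Fin (s' + 1)))))))
      (some (.inr (.inr (.inr (Fin.last s'))))) (some (.inl a)) = 0 := by
    intro a
    rw [QMatrix_symm]
    exact F4 a
  fin_cases i <;> fin_cases j <;>
    simp only [locS, eW, Equiv.optionCongr_apply, Option.map_some, eB,
      Equiv.coe_fn_mk, fB] <;>
    first
      | (rw [F1]; norm_num [B1ent, Fin.ext_iff])
      | (rw [F2]; norm_num [B1ent, Fin.ext_iff])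
      | (rw [F4]; norm_num [B1ent, Fin.ext_iff])
      | (rw [F4']; norm_num [B1ent, Fin.ext_iff])
      | (rw [F3 _ _ (by decide)]; norm_num [B1ent, Fin.ext_iff])

set_option maxHeartbeats 2000000 in
omit hk in
lemma block2 (i j : Fin 4) :
    QMatrix (coneStar k q s') (locS k q s' i) (locS k q s' j) = B2ent i j := by
  unfold coneStar
  have F1 : QMatrix (cone (completeBipartiteGraph (Fin 1) (Fin 3) ⊕g
      ((sigmaGraph fun i => cycleGraph (k i)) ⊕g (K2s q ⊕g (⊥ : SimpleGraph (Fin s'))))))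
      (some (.inl (.inl 0))) (some (.inl (.inl 0))) = 4 := by
    rw [QMatrix_apply_diag, deg_cone_some, deg_sum_inl, deg_CB_inl]
    norm_num
  have F2 : ∀ a : Fin 3, QMatrix (cone (completeBipartiteGraph (Fin 1) (Fin 3) ⊕g
      ((sigmaGraph fun i => cycleGraph (k i)) ⊕g (K2s q ⊕g (⊥ : SimpleGraph (Fin s'))))))
      (some (.inl (.inr a))) (some (.inl (.inr a))) = 2 := by
    intro a
    rw [QMatrix_apply_diag, deg_cone_some, deg_sum_inl, deg_CB_inr]
    norm_num
  have F3 : ∀ a : Fin 3, QMatrix (cone (completeBipartiteGraph (Fin 1) (Fin 3) ⊕g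
      ((sigmaGraph fun i => cycleGraph (k i)) ⊕g (K2s q ⊕g (⊥ : SimpleGraph (Fin s'))))))
      (some (.inl (.inl 0))) (some (.inl (.inr a))) = 1 := by
    intro a
    exact QMatrix_apply_adj _ ((cone_adj_some_some _ _ _).mpr
      (by simp [SimpleGraph.sum_adj]))
  have F3' : ∀ a : Fin 3, QMatrix (cone (completeBipartiteGraph (Fin 1) (Fin 3) ⊕g
      ((sigmaGraph fun i => cycleGraph (k i)) ⊕g (K2s q ⊕g (⊥ : SimpleGraph (Fin s'))))))
      (some (.inl (.inr a))) (some (.inl (.inl 0))) = 1 := by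
    intro a
    rw [QMatrix_symm]
    exact F3 a
  have F4 : ∀ a b : Fin 3, a ≠ b → QMatrix (cone (completeBipartiteGraph (Fin 1) (Fin 3) ⊕g
      ((sigmaGraph fun i => cycleGraph (k i)) ⊕g (K2s q ⊕g (⊥ : SimpleGraph (Fin s'))))))
      (some (.inl (.inr a))) (some (.inl (.inr b))) = 0 := by
    intro a b h
    exact QMatrix_apply_zero _ (by simp [h]) (by simp [SimpleGraph.sum_adj])
  fin_cases i <;> fin_cases j <;>
    simp only [locS] <;>
    first
      | (rw [F1]; norm_num [B2ent, Fin.ext_iff])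
      | (rw [F2]; norm_num [B2ent, Fin.ext_iff])
      | (rw [F3]; norm_num [B2ent, Fin.ext_iff])
      | (rw [F3']; norm_num [B2ent, Fin.ext_iff])
      | (rw [F4 _ _ (by decide)]; norm_num [B2ent, Fin.ext_iff])

set_option maxHeartbeats 2000000 in
omit hk in
lemma row1_zero (j : Fin 4) (r : Rt k q s') :
    QMatrix (coneC3Cycles k q (s' + 1)) (eW k q s' (locS k q s' j))
      (some (.inr (shiftR k q s' r))) = 0 := by
  unfold coneC3Cycles
  fin_cases j <;>
    simp only [locS, eW, Equiv.optionCongr_apply, Option.map_some, eB,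
      Equiv.coe_fn_mk, fB] <;>
    rcases r with (x | (x | m)) <;>
    refine QMatrix_apply_zero _ ?_ ?_ <;>
    simp [shiftR, SimpleGraph.sum_adj]

set_option maxHeartbeats 2000000 in
omit hk in
lemma row2_zero (i : Fin 4) (r : Rt k q s') :
    QMatrix (coneStar k q s') (locS k q s' i) (some (.inr r)) = 0 := by
  unfold coneStar
  fin_cases i <;>
    simp only [locS] <;>
    refine QMatrix_apply_zero _ ?_ ?_ <;>
    simp [SimpleGraph.sum_adj]

set_option maxHeartbeats 800000 in
omit hk in
lemma row1_apex (j : Fin 4) :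
    QMatrix (coneC3Cycles k q (s' + 1)) (eW k q s' (locS k q s' j)) none = 1 := by
  unfold coneC3Cycles
  fin_cases j <;>
    simp only [locS, eW, Equiv.optionCongr_apply, Option.map_some, eB,
      Equiv.coe_fn_mk, fB] <;>
    exact QMatrix_cone_some_none _ _

set_option maxHeartbeats 800000 in
omit hk in
lemma row2_apex (i : Fin 4) :
    QMatrix (coneStar k q s') (locS k q s' i) none = 1 := by
  unfold coneStar
  fin_cases i <;> simp only [locS] <;> exact QMatrix_cone_some_none _ _

omit hk in
lemma locS_inj {i j : Fin 4} (h : locS k q s' i = locS k q s' j) : i = j := by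
  fin_cases i <;> fin_cases j <;> simp_all [locS, Fin.ext_iff]

omit hk in
lemma none_ne_locS (i : Fin 4) : (none : Option (Bst k q s')) ≠ locS k q s' i := by
  fin_cases i <;> simp [locS]

omit hk in
lemma rest_ne_locS (r : Rt k q s') (i : Fin 4) :
    (some (.inr r) : Option (Bst k q s')) ≠ locS k q s' i := by
  fin_cases i <;> simp [locS]

omit hk in
lemma sum_ite_nonlocal (F : Fin 4 → Fin 4 → ℝ) (x : Option (Bst k q s'))
    (hx : ∀ i, x ≠ locS k q s' i) :
    (∑ i, ∑ j, if x = locS k q s' i then F i j else 0) = 0 :=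
  Finset.sum_eq_zero fun i _ => Finset.sum_eq_zero fun _ _ => if_neg (hx i)

omit hk in
lemma sum_ite_local (F : Fin 4 → Fin 4 → ℝ) (i0 : Fin 4) :
    (∑ i, ∑ j, if locS k q s' i0 = locS k q s' i then F i j else 0) = ∑ j, F i0 j := by
  rw [Finset.sum_eq_single i0]
  · simp
  · intro i _ hi
    exact Finset.sum_eq_zero fun j _ => if_neg fun hc => hi (locS_inj k q s' hc).symm
  · simp

omit hk in
lemma sum_ite_nonlocal' (F : Fin 4 → Fin 4 → ℝ) (y : Option (Bst k q s'))
    (hy : ∀ j, y ≠ locS k q s' j) :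
    (∑ i, ∑ j, if y = locS k q s' j then F i j else 0) = 0 :=
  Finset.sum_eq_zero fun i _ => Finset.sum_eq_zero fun j _ => if_neg (hy j)

omit hk in
lemma sum_ite_local' (F : Fin 4 → Fin 4 → ℝ) (j0 : Fin 4) :
    (∑ i, ∑ j, if locS k q s' j0 = locS k q s' j then F i j else 0) = ∑ i, F i j0 := by
  rw [Finset.sum_comm]
  exact sum_ite_local k q s' (fun j i => F i j) j0

open Classical in
omit hk in
lemma Pmat_apply (x y : Option (Bst k q s')) :
    Pmat k q s' x y = (if x = y then 1 else 0) +
      ∑ i, ∑ j, (if x = locS k q s' i ∧ y = locS k q s' j then cent i j else 0) := by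
  rw [Pmat, Matrix.add_apply, Matrix.sum_apply, Matrix.one_apply]
  congr 1
  refine Finset.sum_congr rfl fun i _ => ?_
  rw [Matrix.sum_apply]
  refine Finset.sum_congr rfl fun j _ => ?_
  rw [Matrix.single, Matrix.of_apply]
  by_cases h : locS k q s' i = x ∧ locS k q s' j = y
  · rw [if_pos h, if_pos ⟨h.1.symm, h.2.symm⟩]
  · rw [if_neg h, if_neg fun hc => h ⟨hc.1.symm, hc.2.symm⟩]

omit hk in
lemma Pmat_apply_nonlocal {x : Option (Bst k q s')} (hx : ∀ i, x ≠ locS k q s' i)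
    (y : Option (Bst k q s')) (hxy : x ≠ y) : Pmat k q s' x y = 0 := by
  rw [Pmat_apply, if_neg hxy]
  rw [Finset.sum_eq_zero fun i _ => Finset.sum_eq_zero fun j _ =>
    if_neg fun hc => (hx i) hc.1]
  norm_num

omit hk in
lemma Pmat_apply_local (i0 j0 : Fin 4) :
    Pmat k q s' (locS k q s' i0) (locS k q s' j0) = Uent i0 j0 := by
  classical
  rw [Pmat_apply]
  have h1 : (∑ i, ∑ j, if locS k q s' i0 = locS k q s' i ∧ locS k q s' j0 = locS k q s' j
      then cent i j else 0) = cent i0 j0 := by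
    rw [Finset.sum_eq_single i0]
    · rw [Finset.sum_eq_single j0]
      · simp
      · intro j _ hj
        exact if_neg (by rintro ⟨-, hc⟩; exact hj (locS_inj k q s' hc).symm)
      · simp
    · intro i _ hi
      exact Finset.sum_eq_zero fun j _ =>
        if_neg (by rintro ⟨hc, -⟩; exact hi (locS_inj k q s' hc).symm)
    · simp
  rw [h1, cent]
  by_cases h : i0 = j0
  · subst h; simp
  · rw [if_neg (fun hc => h (locS_inj k q s' hc)), if_neg h]
    ring

omit hk in
lemma Pmat_apply_nonlocal_right {y : Option (Bst k q s')}
    (hy : ∀ j, y ≠ locS k q s' j) (x : Option (Bst k q s')) (hxy : x ≠ y) :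
    Pmat k q s' x y = 0 := by
  classical
  rw [Pmat_apply, if_neg hxy]
  rw [Finset.sum_eq_zero fun i (_ : i ∈ Finset.univ) => Finset.sum_eq_zero
    fun j (_ : j ∈ Finset.univ) => if_neg (by rintro ⟨-, hc⟩; exact hy j hc)]
  norm_num

set_option maxHeartbeats 1000000 in
omit hk in
lemma Pmat_orth : Pmat k q s' * Pmat k q s' = 1 := by
  classical
  ext x y
  rw [Pmat_mul_apply]
  by_cases hx : ∀ i, x ≠ locS k q s' i
  · rw [sum_ite_nonlocal k q s' _ x hx, add_zero]
    by_cases hxy : x = y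
    · subst hxy
      rw [Pmat_apply, Matrix.one_apply_eq, if_pos rfl]
      have hz : (∑ i, ∑ j, if x = locS k q s' i ∧ x = locS k q s' j
          then cent i j else 0) = 0 :=
        Finset.sum_eq_zero fun i _ => Finset.sum_eq_zero fun j _ =>
          if_neg (by rintro ⟨hc, -⟩; exact hx i hc)
      rw [hz, add_zero]
    · rw [Pmat_apply_nonlocal k q s' hx y hxy, Matrix.one_apply_ne hxy]
  · push_neg at hx
    obtain ⟨i0, hi0⟩ := hx
    subst hi0
    rw [sum_ite_local]
    by_cases hy : ∀ j, (y : Option (Bst k q s')) ≠ locS k q s' j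
    · have hxy : locS k q s' i0 ≠ y := fun hc => hy i0 hc.symm
      rw [Matrix.one_apply_ne hxy]
      have hz : (∑ j, cent i0 j * Pmat k q s' (locS k q s' j) y) = 0 :=
        Finset.sum_eq_zero fun j _ => by
          rw [Pmat_apply_nonlocal_right k q s' hy _ (fun hc => hy j hc.symm), mul_zero]
      rw [hz, Pmat_apply_nonlocal_right k q s' hy _ hxy, add_zero]
    · push_neg at hy
      obtain ⟨j0, hj0⟩ := hy
      subst hj0
      simp only [Pmat_apply_local]
      rw [Matrix.one_apply]
      fin_cases i0 <;> fin_cases j0 <;>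
        simp (config := { decide := true }) only [locS, Uent, cent, Fin.sum_univ_four,
          Option.some.injEq, Sum.inl.injEq, Sum.inr.injEq, Fin.isValue, if_true, if_false] <;>
        norm_num

omit hk in
lemma cent_rowsum (i : Fin 4) : (∑ j, cent i j) = 0 := by
  fin_cases i <;>
    simp (config := { decide := true }) only [cent, Uent, Fin.sum_univ_four, Fin.isValue,
      if_true, if_false] <;>
    norm_num

omit hk in
lemma cent_colsum (j : Fin 4) : (∑ i, cent i j) = 0 := by
  fin_cases j <;>
    simp (config := { decide := true }) only [cent, Uent, Fin.sum_univ_four, Fin.isValue,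
      if_true, if_false] <;>
    norm_num

set_option maxHeartbeats 4000000 in
omit hk in
lemma key_intertwine :
    Pmat k q s' * (QMatrix (coneC3Cycles k q (s' + 1))).submatrix (eW k q s') (eW k q s')
      = QMatrix (coneStar k q s') * Pmat k q s' := by
  classical
  ext x y
  rw [Pmat_mul_apply, mul_Pmat_apply]
  simp only [Matrix.submatrix_apply]
  by_cases hx : ∀ i, x ≠ locS k q s' i
  · rw [sum_ite_nonlocal k q s' _ x hx, add_zero]
    by_cases hy : ∀ j, y ≠ locS k q s' j
    · -- both nonlocal : pure entry identity
      rw [sum_ite_nonlocal' k q s' _ y hy, add_zero]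
      rcases x with _ | ((c | i3) | r)
      · rcases y with _ | ((c' | i3') | r')
        · exact entry_rest k q s' none none
        · obtain rfl : c' = 0 := Subsingleton.elim _ _
          exact absurd rfl (hy 0)
        · fin_cases i3' <;>
            [exact absurd rfl (hy 1); exact absurd rfl (hy 2); exact absurd rfl (hy 3)]
        · exact entry_rest k q s' none (some r')
      · obtain rfl : c = 0 := Subsingleton.elim _ _
        exact absurd rfl (hx 0)
      · fin_cases i3 <;>
          [exact absurd rfl (hx 1); exact absurd rfl (hx 2); exact absurd rfl (hx 3)]
      · rcases y with _ | ((c' | i3') | r')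
        · exact entry_rest k q s' (some r) none
        · obtain rfl : c' = 0 := Subsingleton.elim _ _
          exact absurd rfl (hy 0)
        · fin_cases i3' <;>
            [exact absurd rfl (hy 1); exact absurd rfl (hy 2); exact absurd rfl (hy 3)]
        · exact entry_rest k q s' (some r) (some r')
    · -- x nonlocal, y local
      push_neg at hy
      obtain ⟨j0, rfl⟩ := hy
      rw [sum_ite_local']
      rcases x with _ | ((c | i3) | r)
      · -- x = apex
        have h1 : QMatrix (coneC3Cycles k q (s' + 1)) (eW k q s' none)
            (eW k q s' (locS k q s' j0)) = 1 := by
          rw [QMatrix_symm]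
          exact row1_apex k q s' j0
        have h2 : ∀ i, QMatrix (coneStar k q s') none (locS k q s' i) = 1 := fun i => by
          rw [QMatrix_symm]
          exact row2_apex k q s' i
        rw [h1]
        simp only [h2, one_mul]
        rw [cent_colsum]
        norm_num
      · obtain rfl : c = 0 := Subsingleton.elim _ _
        exact absurd rfl (hx 0)
      · fin_cases i3 <;>
          [exact absurd rfl (hx 1); exact absurd rfl (hx 2); exact absurd rfl (hx 3)]
      · -- x in the rest
        have h1 : QMatrix (coneC3Cycles k q (s' + 1)) (eW k q s' (some (.inr r)))
            (eW k q s' (locS k q s' j0)) = 0 := by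
          rw [QMatrix_symm]
          exact row1_zero k q s' j0 r
        have h2 : ∀ i, QMatrix (coneStar k q s') (some (.inr r)) (locS k q s' i) = 0 :=
          fun i => by
            rw [QMatrix_symm]
            exact row2_zero k q s' i r
        rw [h1]
        simp only [h2, zero_mul]
        norm_num
  · push_neg at hx
    obtain ⟨i0, rfl⟩ := hx
    rw [sum_ite_local]
    by_cases hy : ∀ j, y ≠ locS k q s' j
    · rw [sum_ite_nonlocal' k q s' _ y hy, add_zero]
      rcases y with _ | ((c' | i3') | r')
      · -- y = apex
        rw [show eW k q s' none = (none : Option (Bc3 k q s')) from rfl]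
        simp only [row1_apex k q s', mul_one]
        rw [row2_apex k q s' i0, cent_rowsum]
        norm_num
      · obtain rfl : c' = 0 := Subsingleton.elim _ _
        exact absurd rfl (hy 0)
      · fin_cases i3' <;>
          [exact absurd rfl (hy 1); exact absurd rfl (hy 2); exact absurd rfl (hy 3)]
      · -- y in the rest
        have h1 : ∀ j, QMatrix (coneC3Cycles k q (s' + 1)) (eW k q s' (locS k q s' j))
            (eW k q s' (some (.inr r'))) = 0 := fun j => row1_zero k q s' j r'
        simp only [h1, mul_zero]
        rw [row2_zero k q s' i0 r']
        norm_num
    · -- both local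
      push_neg at hy
      obtain ⟨j0, rfl⟩ := hy
      rw [sum_ite_local']
      simp only [block1 k q s', block2 k q s']
      fin_cases i0 <;> fin_cases j0 <;>
        simp (config := { decide := true }) only [cent, Uent, B1ent, B2ent,
          Fin.sum_univ_four, Fin.isValue, if_true, if_false] <;>
        norm_num

lemma charpoly_irrel {n : Type*} [Fintype n] (i1 i2 : DecidableEq n) (M : Matrix n n ℝ) :
    @Matrix.charpoly ℝ _ n i1 _ M = @Matrix.charpoly ℝ _ n i2 _ M := by
  rw [Subsingleton.elim i1 i2]

omit hk in
lemma charpoly_eq :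
    (QMatrix (coneStar k q s')).charpoly
      = (QMatrix (coneC3Cycles k q (s' + 1))).charpoly := by
  have hP := Pmat_orth k q s'
  have hkey := key_intertwine k q s'
  have h2 : QMatrix (coneStar k q s') =
      Pmat k q s' * (QMatrix (coneC3Cycles k q (s' + 1))).submatrix (eW k q s') (eW k q s')
        * Pmat k q s' := by
    rw [hkey, mul_assoc, hP, mul_one]
  rw [h2, charpoly_conj _ _ hP]
  have h3 : (QMatrix (coneC3Cycles k q (s' + 1))).submatrix (eW k q s') (eW k q s')
      = Matrix.reindex (eW k q s').symm (eW k q s').symm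
        (QMatrix (coneC3Cycles k q (s' + 1))) := by
    rw [Matrix.reindex_apply, Equiv.symm_symm]
  rw [h3, Matrix.charpoly_reindex]

set_option maxHeartbeats 1000000 in
omit hk in
lemma spec_eq :
    Qspectrum (coneC3Cycles k q (s' + 1)) = Qspectrum (coneStar k q s') := by
  unfold Qspectrum
  congr 1
  exact (charpoly_irrel _ _ _).trans
    (((charpoly_eq k q s').symm).trans (charpoly_irrel _ _ _))

include hk in
lemma no_iso (hq : 1 ≤ q) :
    IsEmpty (coneC3Cycles k q (s' + 1) ≃g coneStar k q s') := by
  constructor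
  intro φ
  set u2 : Option (Bst k q s') := some (.inl (.inl 0)) with hu2
  have h4 : deg (coneStar k q s') u2 = 4 := by
    unfold coneStar
    rw [hu2, deg_cone_some, deg_sum_inl, deg_CB_inl]
  have hv : deg (coneC3Cycles k q (s' + 1)) (φ.symm u2) = 4 := by
    rw [← deg_iso φ (φ.symm u2), RelIso.apply_symm_apply]
    exact h4
  rcases hsymm : φ.symm u2 with _ | (a | (⟨i, u⟩ | (x | m))) <;> rw [hsymm] at hv <;>
    unfold coneC3Cycles at hv
  · rw [deg_cone_none] at hv
    have hT : Fintype.card (Bc3 k q s') =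
        3 + (Fintype.card (Σ i, Fin (k i)) + (Fintype.card (Σ _ : Fin q, Fin 2) + (s' + 1))) := by
      simp [Fintype.card_sum]
    have hq2 : Fintype.card (Σ _ : Fin q, Fin 2) = 2 * q := by
      simp [Fintype.card_sigma, mul_comm]
    rw [hT, hq2] at hv
    omega
  · rw [deg_cone_some, deg_sum_inl, deg_cycle (by norm_num)] at hv
    omega
  · rw [deg_cone_some, deg_sum_inr, deg_sum_inl, deg_sigma, deg_cycle (hk i)] at hv
    omega
  · rw [deg_cone_some, deg_sum_inr, deg_sum_inr, deg_sum_inl, deg_K2s] at hv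
    omega
  · rw [deg_cone_some, deg_sum_inr, deg_sum_inr, deg_sum_inr, deg_bot] at hv
    omega

end EntryFacts

/-- Theorem 1.3: `K₁ ∨ (C₃ ∪ C_{k₁} ∪ ⋯ ∪ C_{k_{t-1}} ∪ q K₂ ∪ s K₁)` is `Q`-cospectral
with, but not isomorphic to, `K₁ ∨ (K_{1,3} ∪ C_{k₁} ∪ ⋯ ∪ C_{k_{t-1}} ∪ q K₂ ∪ (s-1) K₁)`;
in particular it is not DQS. -/
theorem cone_C3_cycles_not_DQS
    (t q s : ℕ) (ht : 1 ≤ t) (hq : 1 ≤ q) (hs : 1 ≤ s)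
    (k : Fin (t - 1) → ℕ) (hk : ∀ i, 3 ≤ k i) :
    Qspectrum (coneC3Cycles k q s) = Qspectrum (coneStar k q (s - 1)) ∧
    IsEmpty (coneC3Cycles k q s ≃g coneStar k q (s - 1)) ∧
    ¬ IsDQS (coneC3Cycles k q s) := by
  obtain ⟨s'', rfl⟩ : ∃ s'', s = s'' + 1 := ⟨s - 1, by omega⟩
  have hspec := spec_eq k q s''
  have hiso := no_iso k q s'' hk hq
  refine ⟨hspec, hiso, ?_⟩
  intro hDQS
  obtain ⟨ψ⟩ := hDQS _ (coneStar k q s'') hspec.symm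
  exact hiso.false ψ.symm

end Paper
end

section
/- Let G = K_1 ∨ (C_{k_1} ∪ C_{k_2} ∪ ⋯ ∪ C_{k_t} ∪ qK_2 ∪ sK_1) with t, q, s ≥ 1 and k_i ≥ 3 for 1 ≤ i ≤ t, and let n be the order of G. Then the number of subgraphs of G isomorphic to the path P_3 on three vertices is ς_G(P_3) = 3(n − 1 − s) − 4q + C(n−1, 2), where C(n−1, 2) = (n−1)(n−2)/2 is the binomial coefficient. -/
open SimpleGraph Finset

namespace Paper

section Aux
section Counting
variable {V : Type*}

variable {V : Type*}

lemma path3_adj (a b : Fin 3) :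
    (pathGraph 3).Adj a b ↔ (a.val = 0 ∧ b.val = 1) ∨ (a.val = 1 ∧ b.val = 0) ∨
      (a.val = 1 ∧ b.val = 2) ∨ (a.val = 2 ∧ b.val = 1) := by
  rw [pathGraph_adj]; omega

def cherrySub (G : SimpleGraph V) (v : V) (e : Finset V) : G.Subgraph where
  verts := insert v ↑e
  Adj x y := (x = v ∧ y ∈ e ∧ G.Adj v y) ∨ (y = v ∧ x ∈ e ∧ G.Adj v x)
  adj_sub := by rintro x y (⟨rfl, _, h⟩ | ⟨rfl, _, h⟩); exacts [h, h.symm]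
  edge_vert := by
    rintro x y (⟨rfl, _, _⟩ | ⟨_, hx, _⟩)
    · exact Set.mem_insert _ _
    · exact Set.mem_insert_of_mem _ (by exact_mod_cast hx)
  symm := by
    constructor
    rintro x y (h | h)
    · exact Or.inr h
    · exact Or.inl h

lemma cherrySub_adj (G : SimpleGraph V) (v : V) (e : Finset V) (x y : V) :
    (cherrySub G v e).Adj x y ↔
      (x = v ∧ y ∈ e ∧ G.Adj v y) ∨ (y = v ∧ x ∈ e ∧ G.Adj v x) := Iff.rfl

lemma mem_cherrySub_verts {G : SimpleGraph V} {v : V} {e : Finset V} {x : V} :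
    x ∈ (cherrySub G v e).verts ↔ x = v ∨ x ∈ e := by
  show x ∈ insert v (↑e : Set V) ↔ _
  simp

lemma cherrySub_iso [DecidableEq V] (G : SimpleGraph V) (v u w : V) (hu : G.Adj v u) (hw : G.Adj v w)
    (huw : u ≠ w) : Nonempty ((cherrySub G v {u, w}).coe ≃g pathGraph 3) := by
  have hvu : v ≠ u := hu.ne
  have hvw : v ≠ w := hw.ne
  have hu' : u ∈ (cherrySub G v {u, w}).verts := mem_cherrySub_verts.mpr (Or.inr (by simp))
  have hv' : v ∈ (cherrySub G v {u, w}).verts := mem_cherrySub_verts.mpr (Or.inl rfl)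
  have hw' : w ∈ (cherrySub G v {u, w}).verts := mem_cherrySub_verts.mpr (Or.inr (by simp))
  refine ⟨⟨⟨fun x => if x.1 = u then 0 else if x.1 = v then 1 else 2,
    fun i => if i = 0 then ⟨u, hu'⟩ else if i = 1 then ⟨v, hv'⟩ else ⟨w, hw'⟩, ?_, ?_⟩, ?_⟩⟩
  · rintro ⟨x, hx⟩
    rcases mem_cherrySub_verts.mp hx with rfl | hx2
    · simp [hvu]
    · rcases Finset.mem_insert.mp hx2 with rfl | hx3
      · simp
      · rcases Finset.mem_singleton.mp hx3 with rfl
        simp [Ne.symm huw, Ne.symm hvw]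
  · intro i
    fin_cases i
    · simp
    · simp [hvu]
    · simp [Ne.symm huw, Ne.symm hvw]
  · rintro ⟨x, hx⟩ ⟨y, hy⟩
    simp only [Equiv.coe_fn_mk, Subgraph.coe_adj, cherrySub_adj]
    rcases mem_cherrySub_verts.mp hx with rfl | hx2
    · rcases mem_cherrySub_verts.mp hy with rfl | hy2
      · simp [hvu, path3_adj, hvw]
      · rcases Finset.mem_insert.mp hy2 with rfl | hy3
        · simp [hvu, path3_adj, hu, hvw]
        · rcases Finset.mem_singleton.mp hy3 with rfl
          simp [hvu, path3_adj, hw, Ne.symm huw, hvw, hvw.symm]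
    · rcases Finset.mem_insert.mp hx2 with rfl | hx3
      · rcases mem_cherrySub_verts.mp hy with rfl | hy2
        · simp [hvu, path3_adj, hu, hvw]
        · rcases Finset.mem_insert.mp hy2 with rfl | hy3
          · simp [path3_adj, hvu.symm]
          · rcases Finset.mem_singleton.mp hy3 with rfl
            simp [path3_adj, huw, hvu.symm, hvw.symm, Ne.symm huw]
      · rcases Finset.mem_singleton.mp hx3 with rfl
        rcases mem_cherrySub_verts.mp hy with rfl | hy2
        · simp [hvu, path3_adj, hw, Ne.symm huw, hvw, hvw.symm]
        · rcases Finset.mem_insert.mp hy2 with rfl | hy3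
          · simp [path3_adj, Ne.symm huw, huw.symm, hvu.symm, hvw.symm]
          · rcases Finset.mem_singleton.mp hy3 with rfl
            simp [path3_adj, Ne.symm huw, hvw.symm]


lemma exists_cherry [DecidableEq V] {G : SimpleGraph V} (H' : G.Subgraph)
    (phi : H'.coe ≃g pathGraph 3) :
    ∃ (v : V) (e : Finset V), e.card = 2 ∧ (∀ x ∈ e, G.Adj v x) ∧ H' = cherrySub G v e := by
  set A := phi.symm 0 with hA
  set B := phi.symm 1 with hB
  set C := phi.symm 2 with hC
  have e0 : phi A = 0 := by rw [hA]; exact phi.apply_symm_apply 0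
  have e1 : phi B = 1 := by rw [hB]; exact phi.apply_symm_apply 1
  have e2 : phi C = 2 := by rw [hC]; exact phi.apply_symm_apply 2
  have key : ∀ x y : H'.verts, H'.Adj x.1 y.1 ↔ (pathGraph 3).Adj (phi x) (phi y) := by
    intro x y
    rw [phi.map_rel_iff]
    exact (H'.coe_adj x y).symm.to_iff
  have hAB : H'.Adj A.1 B.1 := by
    rw [key A B, e0, e1]; simp [path3_adj]
  have hBC : H'.Adj B.1 C.1 := by
    rw [key B C, e1, e2]; simp [path3_adj]
  have dval : ∀ (x y : H'.verts), x.1 = y.1 → phi x = phi y := by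
    intro x y hxy
    have : x = y := Subtype.ext hxy
    rw [this]
  have dAC : A.1 ≠ C.1 := by
    intro h
    have := dval A C h
    rw [e0, e2] at this
    exact absurd this (by decide)
  have hmem : ∀ x (hx : x ∈ H'.verts), x = A.1 ∨ x = B.1 ∨ x = C.1 := by
    intro x hx
    have h3 : ∀ i : Fin 3, i = 0 ∨ i = 1 ∨ i = 2 := by decide
    rcases h3 (phi ⟨x, hx⟩) with h | h | h
    · left
      have : phi.symm (phi ⟨x, hx⟩) = phi.symm 0 := by rw [h]
      rw [phi.symm_apply_apply, ← hA] at this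
      exact congrArg Subtype.val this
    · right; left
      have : phi.symm (phi ⟨x, hx⟩) = phi.symm 1 := by rw [h]
      rw [phi.symm_apply_apply, ← hB] at this
      exact congrArg Subtype.val this
    · right; right
      have : phi.symm (phi ⟨x, hx⟩) = phi.symm 2 := by rw [h]
      rw [phi.symm_apply_apply, ← hC] at this
      exact congrArg Subtype.val this
  have gBA : G.Adj B.1 A.1 := H'.adj_sub hAB.symm
  have gBC : G.Adj B.1 C.1 := H'.adj_sub hBC
  refine ⟨B.1, {A.1, C.1}, Finset.card_pair dAC, ?_, ?_⟩
  · intro x hx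
    rcases Finset.mem_insert.mp hx with rfl | hx2
    · exact gBA
    · rcases Finset.mem_singleton.mp hx2 with rfl
      exact gBC
  · apply SimpleGraph.Subgraph.ext
    · ext x
      rw [mem_cherrySub_verts]
      constructor
      · intro hx
        rcases hmem x hx with h | h | h
        · right; simp [h]
        · left; exact h
        · right; simp [h]
      · rintro (rfl | hx2)
        · exact B.2
        · rcases Finset.mem_insert.mp hx2 with rfl | hx3
          · exact A.2
          · rcases Finset.mem_singleton.mp hx3 with rfl
            exact C.2
    · funext x y
      apply propext
      constructor
      · intro h
        have hx := H'.edge_vert h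
        have hy := H'.edge_vert h.symm
        rcases hmem x hx with rfl | rfl | rfl <;> rcases hmem y hy with rfl | rfl | rfl
        · exact absurd ((key A A).mp h) (by rw [e0]; simp [path3_adj])
        · exact Or.inr ⟨rfl, by simp, gBA⟩
        · exact absurd ((key A C).mp h) (by rw [e0, e2]; simp [path3_adj])
        · exact Or.inl ⟨rfl, by simp, gBA⟩
        · exact absurd ((key B B).mp h) (by rw [e1]; simp [path3_adj])
        · exact Or.inl ⟨rfl, by simp, gBC⟩
        · exact absurd ((key C A).mp h) (by rw [e0, e2]; simp [path3_adj])
        · exact Or.inr ⟨rfl, by simp, gBC⟩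
        · exact absurd ((key C C).mp h) (by rw [e2]; simp [path3_adj])
      · rintro (⟨rfl, hm, _⟩ | ⟨rfl, hm, _⟩)
        · rcases Finset.mem_insert.mp hm with rfl | hm2
          · exact hAB.symm
          · rcases Finset.mem_singleton.mp hm2 with rfl
            exact hBC
        · rcases Finset.mem_insert.mp hm with rfl | hm2
          · exact hAB
          · rcases Finset.mem_singleton.mp hm2 with rfl
            exact hBC.symm


lemma natCard_P3 [Fintype V] (G : SimpleGraph V) :
    Nat.card {H' : G.Subgraph // Nonempty (H'.coe ≃g pathGraph 3)}
      = ∑ v : V, (Nat.card (G.neighborSet v)).choose 2 := by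
  classical
  have hcf : Nat.card (Σ v : V, {e : Finset V // e.card = 2 ∧ ∀ x ∈ e, G.Adj v x})
      = Nat.card {H' : G.Subgraph // Nonempty (H'.coe ≃g pathGraph 3)} := by
    apply Nat.card_congr
    refine Equiv.ofBijective (fun p => ⟨cherrySub G p.1 p.2.1, ?_⟩) ⟨?_, ?_⟩
    · obtain ⟨u, w, huw, he⟩ := Finset.card_eq_two.mp p.2.2.1
      have hu : G.Adj p.1 u := p.2.2.2 u (by rw [he]; simp)
      have hw : G.Adj p.1 w := p.2.2.2 w (by rw [he]; simp)
      rw [he]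
      exact cherrySub_iso G p.1 u w hu hw huw
    · rintro ⟨v, e, he2, headj⟩ ⟨v', e', he2', headj'⟩ h
      rw [Subtype.mk.injEq] at h
      have hAdj : ∀ x y, (cherrySub G v e).Adj x y ↔ (cherrySub G v' e').Adj x y := by
        intro x y; rw [h]
      obtain ⟨u', w', hne', hew'⟩ := Finset.card_eq_two.mp he2'
      have hu' : u' ∈ e' := by rw [hew']; simp
      have hw' : w' ∈ e' := by rw [hew']; simp
      have h1 : (cherrySub G v' e').Adj v' u' := Or.inl ⟨rfl, hu', headj' u' hu'⟩
      have h2 : (cherrySub G v' e').Adj v' w' := Or.inl ⟨rfl, hw', headj' w' hw'⟩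
      have hvv : v = v' := by
        by_contra hne
        rcases (hAdj v' u').mpr h1 with ⟨hv, _⟩ | ⟨hu, _, _⟩
        · exact hne hv.symm
        · rcases (hAdj v' w').mpr h2 with ⟨hv, _⟩ | ⟨hw, _, _⟩
          · exact hne hv.symm
          · exact hne' (hu.trans hw.symm)
      subst hvv
      have hee : e = e' := by
        ext y
        constructor
        · intro hy
          rcases (hAdj v y).mp (Or.inl ⟨rfl, hy, headj y hy⟩) with ⟨_, hy', _⟩ | ⟨rfl, _, hadj⟩
          · exact hy'
          · exact absurd hadj (G.loopless.irrefl y)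
        · intro hy
          rcases (hAdj v y).mpr (Or.inl ⟨rfl, hy, headj' y hy⟩) with ⟨_, hy', _⟩ | ⟨rfl, _, hadj⟩
          · exact hy'
          · exact absurd hadj (G.loopless.irrefl y)
      subst hee
      rfl
    · rintro ⟨H', ⟨phi⟩⟩
      obtain ⟨v, e, h2, hadj, hH⟩ := exists_cherry H' phi
      exact ⟨⟨v, e, h2, hadj⟩, Subtype.ext hH.symm⟩
  rw [← hcf, Nat.card_eq_fintype_card, Fintype.card_sigma]
  apply Finset.sum_congr rfl
  intro v _
  rw [Fintype.card_subtype]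
  have hps : (univ.filter (fun e : Finset V => e.card = 2 ∧ ∀ x ∈ e, G.Adj v x))
      = (G.neighborFinset v).powersetCard 2 := by
    ext e
    simp only [Finset.mem_filter, Finset.mem_univ, true_and, Finset.mem_powersetCard,
      Finset.subset_iff, SimpleGraph.mem_neighborFinset]
    tauto
  rw [hps, Finset.card_powersetCard, SimpleGraph.neighborFinset, Set.toFinset_card,
    Nat.card_eq_fintype_card]


end Counting

section Nbhd

lemma cone_neighborSet_none {W : Type*} (H : SimpleGraph W) :
    (cone H).neighborSet none = Set.range some := by
  ext y
  cases y <;> simp [cone, SimpleGraph.neighborSet]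

lemma natCard_cone_none {W : Type*} [Fintype W] (H : SimpleGraph W) :
    Nat.card ((cone H).neighborSet (none : Option W)) = Fintype.card W := by
  rw [cone_neighborSet_none,
    Nat.card_congr (Equiv.ofInjective some (Option.some_injective W)).symm,
    Nat.card_eq_fintype_card]

lemma cone_neighborSet_some {W : Type*} (H : SimpleGraph W) (a : W) :
    (cone H).neighborSet (some a) = insert none (some '' H.neighborSet a) := by
  ext y
  cases y <;> simp [cone, SimpleGraph.neighborSet]

lemma natCard_cone_some {W : Type*} [Finite W] (H : SimpleGraph W) (a : W) :
    Nat.card ((cone H).neighborSet (some a)) = Nat.card (H.neighborSet a) + 1 := by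
  rw [cone_neighborSet_some, Nat.card_coe_set_eq,
    Set.ncard_insert_of_notMem (by simp) (Set.toFinite _),
    Set.ncard_image_of_injective _ (Option.some_injective W), ← Nat.card_coe_set_eq]

lemma sum_neighborSet_inl {α β : Type*} (G : SimpleGraph α) (H : SimpleGraph β) (a : α) :
    (G ⊕g H).neighborSet (Sum.inl a) = Sum.inl '' G.neighborSet a := by
  ext y
  cases y <;> simp [SimpleGraph.neighborSet]

lemma sum_neighborSet_inr {α β : Type*} (G : SimpleGraph α) (H : SimpleGraph β) (b : β) :
    (G ⊕g H).neighborSet (Sum.inr b) = Sum.inr '' H.neighborSet b := by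
  ext y
  cases y <;> simp [SimpleGraph.neighborSet]

lemma natCard_sum_inl {α β : Type*} (G : SimpleGraph α) (H : SimpleGraph β) (a : α) :
    Nat.card ((G ⊕g H).neighborSet (Sum.inl a)) = Nat.card (G.neighborSet a) := by
  rw [sum_neighborSet_inl, Nat.card_coe_set_eq,
    Set.ncard_image_of_injective _ Sum.inl_injective, ← Nat.card_coe_set_eq]

lemma natCard_sum_inr {α β : Type*} (G : SimpleGraph α) (H : SimpleGraph β) (b : β) :
    Nat.card ((G ⊕g H).neighborSet (Sum.inr b)) = Nat.card (H.neighborSet b) := by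
  rw [sum_neighborSet_inr, Nat.card_coe_set_eq,
    Set.ncard_image_of_injective _ Sum.inr_injective, ← Nat.card_coe_set_eq]

lemma sigmaGraph_neighborSet {ι : Type*} {Vf : ι → Type*} (Gf : ∀ i, SimpleGraph (Vf i))
    (i : ι) (u : Vf i) :
    (sigmaGraph Gf).neighborSet ⟨i, u⟩ = Sigma.mk i '' (Gf i).neighborSet u := by
  ext y
  simp only [SimpleGraph.mem_neighborSet, Set.mem_image]
  constructor
  · rintro ⟨i', u', v', hx, rfl, h⟩
    injection hx with h1 h2
    subst h1
    rw [heq_eq_eq] at h2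
    subst h2
    exact ⟨v', h, rfl⟩
  · rintro ⟨v, hv, rfl⟩
    exact ⟨i, u, v, rfl, rfl, hv⟩

lemma natCard_sigmaGraph {ι : Type*} {Vf : ι → Type*} (Gf : ∀ i, SimpleGraph (Vf i))
    (i : ι) (u : Vf i) :
    Nat.card ((sigmaGraph Gf).neighborSet ⟨i, u⟩) = Nat.card ((Gf i).neighborSet u) := by
  rw [sigmaGraph_neighborSet, Nat.card_coe_set_eq,
    Set.ncard_image_of_injective _ sigma_mk_injective, ← Nat.card_coe_set_eq]

lemma natCard_cycle (m : ℕ) (v : Fin (m + 3)) :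
    Nat.card ((cycleGraph (m + 3)).neighborSet v) = 2 := by
  rw [Nat.card_eq_fintype_card, SimpleGraph.card_neighborSet_eq_degree,
    cycleGraph_degree_three_le]

lemma natCard_cycle' (c : ℕ) (hc : 3 ≤ c) (v : Fin c) :
    Nat.card ((cycleGraph c).neighborSet v) = 2 := by
  obtain ⟨m, rfl⟩ : ∃ m, c = m + 3 := ⟨c - 3, by omega⟩
  exact natCard_cycle m v

lemma natCard_top2 (v : Fin 2) :
    Nat.card ((⊤ : SimpleGraph (Fin 2)).neighborSet v) = 1 := by
  rw [Nat.card_eq_fintype_card, SimpleGraph.card_neighborSet_eq_degree,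
    SimpleGraph.complete_graph_degree]
  simp

lemma natCard_bot {α : Type*} (v : α) :
    Nat.card ((⊥ : SimpleGraph α).neighborSet v) = 0 := by
  simp [SimpleGraph.neighborSet]

end Nbhd
end Aux

lemma sum_choose_coneCycles (t q s : ℕ) (k : Fin t → ℕ) (hk : ∀ i, 3 ≤ k i) :
    ∑ v, (Nat.card ((coneCycles k q s).neighborSet v)).choose 2
      = ((∑ i, k i) + (2 * q + s)).choose 2 + (3 * (∑ i, k i) + 2 * q) := by
  classical
  have hceq : coneCycles k q s = cone ((sigmaGraph fun i => cycleGraph (k i)) ⊕g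
      (K2s q ⊕g (⊥ : SimpleGraph (Fin s)))) := rfl
  rw [hceq, Fintype.sum_option, natCard_cone_none]
  have e1 : ∀ x : Σ i, Fin (k i),
      (Nat.card ((cone ((sigmaGraph fun i => cycleGraph (k i)) ⊕g
        (K2s q ⊕g (⊥ : SimpleGraph (Fin s))))).neighborSet (some (Sum.inl x)))).choose 2 = 3 := by
    rintro ⟨i, j⟩
    rw [natCard_cone_some, natCard_sum_inl, natCard_sigmaGraph, natCard_cycle' (k i) (hk i)]
    rfl
  have e2 : ∀ y : Σ _ : Fin q, Fin 2,
      (Nat.card ((cone ((sigmaGraph fun i => cycleGraph (k i)) ⊕g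
        (K2s q ⊕g (⊥ : SimpleGraph (Fin s))))).neighborSet
          (some (Sum.inr (Sum.inl y))))).choose 2 = 1 := by
    rintro ⟨i, j⟩
    rw [natCard_cone_some, natCard_sum_inr, natCard_sum_inl, K2s, natCard_sigmaGraph,
      natCard_top2]
    rfl
  have e3 : ∀ z : Fin s,
      (Nat.card ((cone ((sigmaGraph fun i => cycleGraph (k i)) ⊕g
        (K2s q ⊕g (⊥ : SimpleGraph (Fin s))))).neighborSet
          (some (Sum.inr (Sum.inr z))))).choose 2 = 0 := by
    intro z
    rw [natCard_cone_some, natCard_sum_inr, natCard_sum_inr, natCard_bot]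
    rfl
  rw [Fintype.sum_sum_type, Fintype.sum_sum_type]
  rw [Finset.sum_congr rfl (fun x _ => e1 x), Finset.sum_congr rfl (fun y _ => e2 y),
    Finset.sum_congr rfl (fun z _ => e3 z)]
  simp [Fintype.card_sigma, mul_comm]

/-- Lemma 4.2 (i): the number of subgraphs of `G = K₁ ∨ (C_{k₁} ∪ ⋯ ∪ C_{k_t} ∪ q K₂ ∪ s K₁)`
isomorphic to `P₃` equals `3(n - 1 - s) - 4q + C(n-1, 2)`. -/
theorem subgraphCount_P3_coneCycles
    (t q s n : ℕ) (ht : 1 ≤ t) (hq : 1 ≤ q) (hs : 1 ≤ s)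
    (k : Fin t → ℕ) (hk : ∀ i, 3 ≤ k i)
    (hn : n = Fintype.card (Option ((Σ i, Fin (k i)) ⊕ ((Σ _ : Fin q, Fin 2) ⊕ Fin s)))) :
    (subgraphCount (coneCycles k q s) (pathGraph 3) : ℤ) =
      3 * ((n : ℤ) - 1 - (s : ℤ)) - 4 * (q : ℤ) + ((n - 1).choose 2 : ℤ) := by
  classical
  have hcount : subgraphCount (coneCycles k q s) (pathGraph 3)
      = ∑ v, (Nat.card ((coneCycles k q s).neighborSet v)).choose 2 :=
    natCard_P3 _
  rw [hcount, sum_choose_coneCycles t q s k hk]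
  have hn' : n = (∑ i, k i) + (2 * q + s) + 1 := by
    rw [hn]
    simp [Fintype.card_sigma, mul_comm]
  rw [hn', Nat.add_sub_cancel]
  push_cast
  ring

end Paper
end

section
/- Let G = K_1 ∨ (C_{k_1} ∪ C_{k_2} ∪ ⋯ ∪ C_{k_t} ∪ qK_2 ∪ sK_1) with t, q, s ≥ 1 and k_i ≥ 3 for 1 ≤ i ≤ t, and let n be the order of G. Then the number of subgraphs of G isomorphic to the 4-cycle C_4 is ς_G(C_4) = n − 2q − s − 1 + |{i : 1 ≤ i ≤ t, k_i = 4}|. In particular, if k_i ≠ 4 for all i, then ς_G(C_4) = n − 2q − s − 1. -/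
open SimpleGraph Finset

namespace Paper

section AuxC4
variable {V : Type*} {G : SimpleGraph V}

def c4sub (G : SimpleGraph V) (a b c d : V) (hab : G.Adj a b) (hbc : G.Adj b c)
    (hcd : G.Adj c d) (hda : G.Adj d a) : G.Subgraph where
  verts := {a, b, c, d}
  Adj x y := s(x,y) = s(a,b) ∨ s(x,y) = s(b,c) ∨ s(x,y) = s(c,d) ∨ s(x,y) = s(d,a)
  adj_sub := by
    rintro x y (h | h | h | h) <;> rw [Sym2.eq_iff] at h <;>
      rcases h with ⟨rfl, rfl⟩ | ⟨rfl, rfl⟩ <;>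
      first
        | exact hab | exact hab.symm | exact hbc | exact hbc.symm
        | exact hcd | exact hcd.symm | exact hda | exact hda.symm
  edge_vert := by
    rintro x y (h | h | h | h) <;> rw [Sym2.eq_iff] at h <;>
      rcases h with ⟨rfl, rfl⟩ | ⟨rfl, rfl⟩ <;> simp [Set.mem_insert_iff]
  symm := by
    constructor
    intro x y h
    rwa [Sym2.eq_swap] at h

lemma c4sub_adj {a b c d : V} {hab : G.Adj a b} {hbc : G.Adj b c} {hcd : G.Adj c d}
    {hda : G.Adj d a} {x y : V} :
    (c4sub G a b c d hab hbc hcd hda).Adj x y ↔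
      s(x,y) = s(a,b) ∨ s(x,y) = s(b,c) ∨ s(x,y) = s(c,d) ∨ s(x,y) = s(d,a) := Iff.rfl

lemma c4sub_verts {a b c d : V} {hab : G.Adj a b} {hbc : G.Adj b c} {hcd : G.Adj c d}
    {hda : G.Adj d a} :
    (c4sub G a b c d hab hbc hcd hda).verts = {a, b, c, d} := rfl

lemma c4sub_rot {a b c d : V} (hab : G.Adj a b) (hbc : G.Adj b c) (hcd : G.Adj c d)
    (hda : G.Adj d a) :
    c4sub G a b c d hab hbc hcd hda = c4sub G b c d a hbc hcd hda hab := by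
  apply SimpleGraph.Subgraph.ext
  · show ({a,b,c,d} : Set V) = {b,c,d,a}
    ext x; simp only [Set.mem_insert_iff, Set.mem_singleton_iff]; tauto
  · ext x y
    simp only [c4sub_adj]
    tauto

lemma c4sub_rev {a b c d : V} (hab : G.Adj a b) (hbc : G.Adj b c) (hcd : G.Adj c d)
    (hda : G.Adj d a) (had : G.Adj a d) (hdc : G.Adj d c) (hcb : G.Adj c b)
    (hba : G.Adj b a) :
    c4sub G a b c d hab hbc hcd hda = c4sub G a d c b had hdc hcb hba := by
  apply SimpleGraph.Subgraph.ext
  · show ({a,b,c,d} : Set V) = {a,d,c,b}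
    ext x; simp only [Set.mem_insert_iff, Set.mem_singleton_iff]; tauto
  · ext x y
    simp only [c4sub_adj]
    rw [show s(a,d) = s(d,a) from Sym2.eq_swap, show s(d,c) = s(c,d) from Sym2.eq_swap,
      show s(c,b) = s(b,c) from Sym2.eq_swap, show s(b,a) = s(a,b) from Sym2.eq_swap]
    tauto

lemma c4sub_eq_of {a b c d a' b' c' d' : V} (hab : G.Adj a b) (hbc : G.Adj b c)
    (hcd : G.Adj c d) (hda : G.Adj d a) (hab' : G.Adj a' b') (hbc' : G.Adj b' c')
    (hcd' : G.Adj c' d') (hda' : G.Adj d' a')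
    (hv : ({a,b,c,d} : Set V) = {a',b',c',d'})
    (he : ∀ x y : V, (s(x,y) = s(a,b) ∨ s(x,y) = s(b,c) ∨ s(x,y) = s(c,d) ∨ s(x,y) = s(d,a))
      ↔ (s(x,y) = s(a',b') ∨ s(x,y) = s(b',c') ∨ s(x,y) = s(c',d') ∨ s(x,y) = s(d',a'))) :
    c4sub G a b c d hab hbc hcd hda = c4sub G a' b' c' d' hab' hbc' hcd' hda' := by
  apply SimpleGraph.Subgraph.ext
  · exact hv
  · ext x y
    exact he x y

lemma sym2_map_eq {α β : Type*} {f : α → β} (hf : Function.Injective f) (x y u v : α) :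
    s(f x, f y) = s(f u, f v) ↔ s(x, y) = s(u, v) := by
  simp [Sym2.eq_iff, hf.eq_iff]

lemma quad_map {α β : Type*} {f : α → β} (hf : Function.Injective f) {a b c d a' b' c' d' : α}
    (h : ∀ x : α, (x = a ∨ x = b ∨ x = c ∨ x = d) ↔ (x = a' ∨ x = b' ∨ x = c' ∨ x = d')) :
    ({f a, f b, f c, f d} : Set β) = {f a', f b', f c', f d'} := by
  ext x
  simp only [Set.mem_insert_iff, Set.mem_singleton_iff]
  constructor
  · rintro (rfl | rfl | rfl | rfl)
    · rcases (h a).1 (Or.inl rfl) with h' | h' | h' | h' <;> rw [h'] <;> tauto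
    · rcases (h b).1 (Or.inr (Or.inl rfl)) with h' | h' | h' | h' <;> rw [h'] <;> tauto
    · rcases (h c).1 (Or.inr (Or.inr (Or.inl rfl))) with h' | h' | h' | h' <;>
        rw [h'] <;> tauto
    · rcases (h d).1 (Or.inr (Or.inr (Or.inr rfl))) with h' | h' | h' | h' <;>
        rw [h'] <;> tauto
  · rintro (rfl | rfl | rfl | rfl)
    · rcases (h a').2 (Or.inl rfl) with h' | h' | h' | h' <;> rw [h'] <;> tauto
    · rcases (h b').2 (Or.inr (Or.inl rfl)) with h' | h' | h' | h' <;> rw [h'] <;> tauto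
    · rcases (h c').2 (Or.inr (Or.inr (Or.inl rfl))) with h' | h' | h' | h' <;>
        rw [h'] <;> tauto
    · rcases (h d').2 (Or.inr (Or.inr (Or.inr rfl))) with h' | h' | h' | h' <;>
        rw [h'] <;> tauto

lemma edge_map_aux {α β : Type*} {f : α → β} (hf : Function.Injective f)
    {a b c d a' b' c' d' : α}
    (h : ∀ u v : α, (s(u,v) = s(a,b) ∨ s(u,v) = s(b,c) ∨ s(u,v) = s(c,d) ∨ s(u,v) = s(d,a))
      → (s(u,v) = s(a',b') ∨ s(u,v) = s(b',c') ∨ s(u,v) = s(c',d') ∨ s(u,v) = s(d',a')))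
    (x y : β)
    (hh : s(x,y) = s(f a, f b) ∨ s(x,y) = s(f b, f c) ∨ s(x,y) = s(f c, f d)
      ∨ s(x,y) = s(f d, f a)) :
    s(x,y) = s(f a', f b') ∨ s(x,y) = s(f b', f c') ∨ s(x,y) = s(f c', f d')
      ∨ s(x,y) = s(f d', f a') := by
  have step : ∃ u v, x = f u ∧ y = f v ∧
      (s(u,v) = s(a,b) ∨ s(u,v) = s(b,c) ∨ s(u,v) = s(c,d) ∨ s(u,v) = s(d,a)) := by
    rcases hh with h1 | h1 | h1 | h1 <;> rw [Sym2.eq_iff] at h1 <;>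
      rcases h1 with ⟨rfl, rfl⟩ | ⟨rfl, rfl⟩
    · exact ⟨a, b, rfl, rfl, Or.inl rfl⟩
    · exact ⟨b, a, rfl, rfl, Or.inl Sym2.eq_swap⟩
    · exact ⟨b, c, rfl, rfl, Or.inr (Or.inl rfl)⟩
    · exact ⟨c, b, rfl, rfl, Or.inr (Or.inl Sym2.eq_swap)⟩
    · exact ⟨c, d, rfl, rfl, Or.inr (Or.inr (Or.inl rfl))⟩
    · exact ⟨d, c, rfl, rfl, Or.inr (Or.inr (Or.inl Sym2.eq_swap))⟩
    · exact ⟨d, a, rfl, rfl, Or.inr (Or.inr (Or.inr rfl))⟩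
    · exact ⟨a, d, rfl, rfl, Or.inr (Or.inr (Or.inr Sym2.eq_swap))⟩
  obtain ⟨u, v, rfl, rfl, hs⟩ := step
  rcases h u v hs with h2 | h2 | h2 | h2
  · exact Or.inl ((sym2_map_eq hf u v a' b').2 h2)
  · exact Or.inr (Or.inl ((sym2_map_eq hf u v b' c').2 h2))
  · exact Or.inr (Or.inr (Or.inl ((sym2_map_eq hf u v c' d').2 h2)))
  · exact Or.inr (Or.inr (Or.inr ((sym2_map_eq hf u v d' a').2 h2)))

-- Fin 4 decide lemmas
lemma fin4_v_plus' : ∀ a x : Fin 4, (x = a ∨ x = a+1 ∨ x = a+1+1 ∨ x = a+1+1+1) ↔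
    (x = ⟨0, by omega⟩ ∨ x = ⟨1, by omega⟩ ∨ x = ⟨2, by omega⟩
      ∨ x = ⟨3, by omega⟩) := by decide

lemma fin4_v_minus' : ∀ a x : Fin 4, (x = a ∨ x = a-1 ∨ x = a-1-1 ∨ x = a-1-1-1) ↔
    (x = ⟨0, by omega⟩ ∨ x = ⟨1, by omega⟩ ∨ x = ⟨2, by omega⟩
      ∨ x = ⟨3, by omega⟩) := by decide

lemma fin4_e_plus' : ∀ a x y : Fin 4,
    (s(x,y) = s(a,a+1) ∨ s(x,y) = s(a+1,a+1+1) ∨ s(x,y) = s(a+1+1,a+1+1+1)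
      ∨ s(x,y) = s(a+1+1+1,a)) ↔
    (s(x,y) = s((⟨0, by omega⟩ : Fin 4), ⟨1, by omega⟩)
      ∨ s(x,y) = s((⟨1, by omega⟩ : Fin 4), ⟨2, by omega⟩)
      ∨ s(x,y) = s((⟨2, by omega⟩ : Fin 4), ⟨3, by omega⟩)
      ∨ s(x,y) = s((⟨3, by omega⟩ : Fin 4), ⟨0, by omega⟩)) := by decide

lemma fin4_e_minus' : ∀ a x y : Fin 4,
    (s(x,y) = s(a,a-1) ∨ s(x,y) = s(a-1,a-1-1) ∨ s(x,y) = s(a-1-1,a-1-1-1)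
      ∨ s(x,y) = s(a-1-1-1,a)) ↔
    (s(x,y) = s((⟨0, by omega⟩ : Fin 4), ⟨1, by omega⟩)
      ∨ s(x,y) = s((⟨1, by omega⟩ : Fin 4), ⟨2, by omega⟩)
      ∨ s(x,y) = s((⟨2, by omega⟩ : Fin 4), ⟨3, by omega⟩)
      ∨ s(x,y) = s((⟨3, by omega⟩ : Fin 4), ⟨0, by omega⟩)) := by decide

lemma cyc_adj_mk {n : ℕ} (h4 : n = 4) :
    (cycleGraph n).Adj ⟨0, by omega⟩ ⟨1, by omega⟩ ∧
    (cycleGraph n).Adj ⟨1, by omega⟩ ⟨2, by omega⟩ ∧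
    (cycleGraph n).Adj ⟨2, by omega⟩ ⟨3, by omega⟩ ∧
    (cycleGraph n).Adj ⟨3, by omega⟩ ⟨0, by omega⟩ := by
  subst h4; decide

lemma mk_distinct {n : ℕ} (h4 : n = 4) :
    (⟨0, by omega⟩ : Fin n) ≠ ⟨1, by omega⟩ ∧ (⟨0, by omega⟩ : Fin n) ≠ ⟨2, by omega⟩ ∧
    (⟨0, by omega⟩ : Fin n) ≠ ⟨3, by omega⟩ ∧ (⟨1, by omega⟩ : Fin n) ≠ ⟨2, by omega⟩ ∧
    (⟨1, by omega⟩ : Fin n) ≠ ⟨3, by omega⟩ ∧ (⟨2, by omega⟩ : Fin n) ≠ ⟨3, by omega⟩ := by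
  subst h4; decide

lemma fin4_chain_distinct' : ∀ a : Fin 4, a ≠ a+1 ∧ a ≠ a+1+1 ∧ a ≠ a+1+1+1 ∧ a+1 ≠ a+1+1
    ∧ a+1 ≠ a+1+1+1 ∧ a+1+1 ≠ a+1+1+1 := by decide

lemma fin4_add_four' : ∀ u : Fin 4, u + 1 + 1 + 1 + 1 = u := by decide

lemma fin4_v_plus {n : ℕ} [NeZero n] (hn : n = 4) (a : Fin n) (x : Fin n) :
    (x = a ∨ x = a+1 ∨ x = a+1+1 ∨ x = a+1+1+1) ↔
    (x = ⟨0, by omega⟩ ∨ x = ⟨1, by omega⟩ ∨ x = ⟨2, by omega⟩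
      ∨ x = ⟨3, by omega⟩) := by
  subst hn
  exact fin4_v_plus' a x

lemma fin4_v_minus {n : ℕ} [NeZero n] (hn : n = 4) (a : Fin n) (x : Fin n) :
    (x = a ∨ x = a-1 ∨ x = a-1-1 ∨ x = a-1-1-1) ↔
    (x = ⟨0, by omega⟩ ∨ x = ⟨1, by omega⟩ ∨ x = ⟨2, by omega⟩
      ∨ x = ⟨3, by omega⟩) := by
  subst hn
  exact fin4_v_minus' a x

lemma fin4_e_plus {n : ℕ} [NeZero n] (hn : n = 4) (a : Fin n) (x y : Fin n) :
    (s(x,y) = s(a,a+1) ∨ s(x,y) = s(a+1,a+1+1) ∨ s(x,y) = s(a+1+1,a+1+1+1)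
      ∨ s(x,y) = s(a+1+1+1,a)) ↔
    (s(x,y) = s((⟨0, by omega⟩ : Fin n), ⟨1, by omega⟩)
      ∨ s(x,y) = s((⟨1, by omega⟩ : Fin n), ⟨2, by omega⟩)
      ∨ s(x,y) = s((⟨2, by omega⟩ : Fin n), ⟨3, by omega⟩)
      ∨ s(x,y) = s((⟨3, by omega⟩ : Fin n), ⟨0, by omega⟩)) := by
  subst hn
  exact fin4_e_plus' a x y

lemma fin4_e_minus {n : ℕ} [NeZero n] (hn : n = 4) (a : Fin n) (x y : Fin n) :
    (s(x,y) = s(a,a-1) ∨ s(x,y) = s(a-1,a-1-1) ∨ s(x,y) = s(a-1-1,a-1-1-1)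
      ∨ s(x,y) = s(a-1-1-1,a)) ↔
    (s(x,y) = s((⟨0, by omega⟩ : Fin n), ⟨1, by omega⟩)
      ∨ s(x,y) = s((⟨1, by omega⟩ : Fin n), ⟨2, by omega⟩)
      ∨ s(x,y) = s((⟨2, by omega⟩ : Fin n), ⟨3, by omega⟩)
      ∨ s(x,y) = s((⟨3, by omega⟩ : Fin n), ⟨0, by omega⟩)) := by
  subst hn
  exact fin4_e_minus' a x y

lemma fin4_chain_distinct {n : ℕ} [NeZero n] (hn : n = 4) (a : Fin n) :
    a ≠ a+1 ∧ a ≠ a+1+1 ∧ a ≠ a+1+1+1 ∧ a+1 ≠ a+1+1 ∧ a+1 ≠ a+1+1+1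
      ∧ a+1+1 ≠ a+1+1+1 := by
  subst hn
  exact fin4_chain_distinct' a

lemma fin4_add_four {n : ℕ} [NeZero n] (hn : n = 4) (u : Fin n) : u + 1 + 1 + 1 + 1 = u := by
  subst hn
  exact fin4_add_four' u


lemma cyc_adj_iff {n : ℕ} [NeZero n] (hn : 2 ≤ n) (u v : Fin n) :
    (cycleGraph n).Adj u v ↔ v = u + 1 ∨ v = u - 1 := by
  rw [cycleGraph_adj']
  have h1 : (1 : Fin n).val = 1 := by rw [Fin.val_one']; exact Nat.mod_eq_of_lt (by omega)
  constructor
  · rintro (h | h)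
    · right
      have huv : u - v = 1 := Fin.ext (by rw [h1]; exact h)
      have h2 : u = 1 + v := by rwa [sub_eq_iff_eq_add] at huv
      exact (eq_sub_of_add_eq (by rw [add_comm]; exact h2.symm)).symm.symm
    · left
      have huv : v - u = 1 := Fin.ext (by rw [h1]; exact h)
      have h2 : v = 1 + u := by rwa [sub_eq_iff_eq_add] at huv
      rw [h2, add_comm]
  · rintro (rfl | rfl)
    · right; rw [show u + 1 - u = 1 by rw [add_sub_cancel_left], h1]
    · left; rw [show u - (u - 1) = 1 by rw [sub_sub_cancel], h1]

lemma fin_add_one_ne {n : ℕ} [NeZero n] (hn : 2 ≤ n) (u : Fin n) : u + 1 ≠ u := by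
  intro h
  have h0 : (1 : Fin n) = 0 := by
    have := congrArg (fun x => x - u) h
    simpa [add_comm, add_sub_cancel_right, sub_self] using this
  have := congrArg Fin.val h0
  rw [Fin.val_one'] at this
  rw [Nat.mod_eq_of_lt (by omega)] at this
  simp at this

lemma fin_sub_one_ne {n : ℕ} [NeZero n] (hn : 2 ≤ n) (u : Fin n) : u - 1 ≠ u := by
  intro h
  have h2 : u + 1 = u := by
    have := congrArg (fun x => x + 1) h
    simp only [sub_add_cancel] at this
    rw [← this]
  exact fin_add_one_ne hn u h2

open Fin.NatCast in
lemma fin_two_ne_zero {n : ℕ} [NeZero n] (hn : 3 ≤ n) : ((2 : ℕ) : Fin n) ≠ 0 := by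
  intro h
  have := (CharP.cast_eq_zero_iff (Fin n) n 2).mp h
  have := Nat.le_of_dvd (by norm_num) this
  omega

open Fin.NatCast in
lemma fin_add_two_ne {n : ℕ} [NeZero n] (hn : 3 ≤ n) (u : Fin n) : u + ((2:ℕ):Fin n) ≠ u := by
  intro h
  apply fin_two_ne_zero hn
  have := congrArg (fun x => x - u) h
  simpa [add_comm, add_sub_cancel_right, sub_self] using this

open Fin.NatCast in
lemma fin_add_ne_sub {n : ℕ} [NeZero n] (hn : 3 ≤ n) (u : Fin n) : u + 1 ≠ u - 1 := by
  intro h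
  apply fin_add_two_ne hn (u - 1)
  have : u - 1 + 1 = u := sub_add_cancel u 1
  calc u - 1 + ((2:ℕ):Fin n) = u - 1 + 1 + 1 := by push_cast; rw [← one_add_one_eq_two, add_assoc]
    _ = u + 1 := by rw [this]
    _ = u - 1 := h

open Fin.NatCast in
lemma fin_n_eq_four {n : ℕ} [NeZero n] (hn : 3 ≤ n) (u : Fin n)
    (h : u + ((4 : ℕ) : Fin n) = u) : n = 4 := by
  have h0 : ((4 : ℕ) : Fin n) = 0 := by
    have := congrArg (fun x => x - u) h
    simpa [add_comm, add_sub_cancel_right, sub_self] using this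
  have hd := (CharP.cast_eq_zero_iff (Fin n) n 4).mp h0
  have h4 := Nat.le_of_dvd (by norm_num) hd
  interval_cases n
  · exact absurd hd (by norm_num)
  · rfl


lemma iso_c4sub (a b c d : V) (hab : G.Adj a b) (hbc : G.Adj b c)
    (hcd : G.Adj c d) (hda : G.Adj d a)
    (h1 : a ≠ b) (h2 : a ≠ c) (h3 : a ≠ d) (h4 : b ≠ c) (h5 : b ≠ d) (h6 : c ≠ d) :
    Nonempty ((c4sub G a b c d hab hbc hcd hda).coe ≃g cycleGraph 4) := by
  set H' := c4sub G a b c d hab hbc hcd hda with hH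
  have ha : a ∈ H'.verts := by simp [hH, c4sub_verts]
  have hb : b ∈ H'.verts := by simp [hH, c4sub_verts]
  have hc : c ∈ H'.verts := by simp [hH, c4sub_verts]
  have hd : d ∈ H'.verts := by simp [hH, c4sub_verts]
  let f : Fin 4 → H'.verts := ![⟨a, ha⟩, ⟨b, hb⟩, ⟨c, hc⟩, ⟨d, hd⟩]
  have hbij : Function.Bijective f := by
    constructor
    · intro i j hij
      fin_cases i <;> fin_cases j <;>
        simp_all [f, Subtype.ext_iff] <;>
        first | rfl | exact absurd hij (by assumption) |
          exact absurd hij.symm (by assumption)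
    · rintro ⟨x, hx⟩
      rcases hx with rfl | rfl | rfl | rfl
      · exact ⟨0, rfl⟩
      · exact ⟨1, rfl⟩
      · exact ⟨2, rfl⟩
      · exact ⟨3, rfl⟩
  refine ⟨(RelIso.mk (Equiv.ofBijective f hbij) ?_).symm⟩
  intro i j
  show H'.Adj (f i).1 (f j).1 ↔ (cycleGraph 4).Adj i j
  fin_cases i <;> fin_cases j <;>
    simp [f, hH, c4sub_adj, Sym2.eq_iff, cycleGraph_adj, h1, h2, h3, h4, h5, h6,
      h1.symm, h2.symm, h3.symm, h4.symm, h5.symm, h6.symm] <;> decide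


lemma exists_c4 (H' : G.Subgraph) (e : H'.coe ≃g cycleGraph 4) :
    ∃ (a b c d : V) (hab : G.Adj a b) (hbc : G.Adj b c) (hcd : G.Adj c d) (hda : G.Adj d a),
      a ≠ b ∧ a ≠ c ∧ a ≠ d ∧ b ≠ c ∧ b ≠ d ∧ c ≠ d ∧
      H' = c4sub G a b c d hab hbc hcd hda := by
  let g : Fin 4 → H'.verts := fun i => e.symm i
  have hg : Function.Injective g := fun i j h => by
    simpa using e.symm.injective h
  have hadj : ∀ i j : Fin 4, (cycleGraph 4).Adj i j → H'.Adj (g i).1 (g j).1 := by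
    intro i j hij
    have := e.symm.map_rel_iff.2 hij
    exact this
  have key : ∀ i j : Fin 4, H'.Adj (g i).1 (g j).1 ↔ (cycleGraph 4).Adj i j := by
    intro i j
    constructor
    · intro h
      have : H'.coe.Adj (g i) (g j) := h
      have := e.symm.map_rel_iff.1 (by simpa using this)
      simpa using this
    · exact hadj i j
  have hd01 : (cycleGraph 4).Adj 0 1 := by decide
  have hd12 : (cycleGraph 4).Adj 1 2 := by decide
  have hd23 : (cycleGraph 4).Adj 2 3 := by decide
  have hd30 : (cycleGraph 4).Adj 3 0 := by decide
  refine ⟨(g 0).1, (g 1).1, (g 2).1, (g 3).1,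
    H'.adj_sub (hadj 0 1 hd01), H'.adj_sub (hadj 1 2 hd12),
    H'.adj_sub (hadj 2 3 hd23), H'.adj_sub (hadj 3 0 hd30), ?_, ?_, ?_, ?_, ?_, ?_, ?_⟩
  · exact fun h => (by decide : (0:Fin 4) ≠ 1) (hg (Subtype.ext h))
  · exact fun h => (by decide : (0:Fin 4) ≠ 2) (hg (Subtype.ext h))
  · exact fun h => (by decide : (0:Fin 4) ≠ 3) (hg (Subtype.ext h))
  · exact fun h => (by decide : (1:Fin 4) ≠ 2) (hg (Subtype.ext h))
  · exact fun h => (by decide : (1:Fin 4) ≠ 3) (hg (Subtype.ext h))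
  · exact fun h => (by decide : (2:Fin 4) ≠ 3) (hg (Subtype.ext h))
  · apply SimpleGraph.Subgraph.ext
    · ext x
      simp only [c4sub_verts, Set.mem_insert_iff, Set.mem_singleton_iff]
      constructor
      · intro hx
        have : ∃ i : Fin 4, g i = ⟨x, hx⟩ := ⟨e ⟨x, hx⟩, by simp [g]⟩
        obtain ⟨i, hi⟩ := this
        have hxv : x = (g i).1 := (congrArg Subtype.val hi).symm
        fin_cases i
        · exact Or.inl hxv
        · exact Or.inr (Or.inl hxv)
        · exact Or.inr (Or.inr (Or.inl hxv))
        · exact Or.inr (Or.inr (Or.inr hxv))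
      · rintro (h | h | h | h) <;> rw [h] <;> exact (g _).2
    · ext x y
      rw [c4sub_adj]
      constructor
      · intro h
        have hx : x ∈ H'.verts := H'.edge_vert h
        have hy : y ∈ H'.verts := H'.edge_vert h.symm
        obtain ⟨i, hi⟩ : ∃ i : Fin 4, g i = ⟨x, hx⟩ := ⟨e ⟨x, hx⟩, by simp [g]⟩
        obtain ⟨j, hj⟩ : ∃ j : Fin 4, g j = ⟨y, hy⟩ := ⟨e ⟨y, hy⟩, by simp [g]⟩
        have hx' : (g i).1 = x := by rw [hi]
        have hy' : (g j).1 = y := by rw [hj]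
        rw [← hx', ← hy'] at h
        have hc := (key i j).1 h
        rw [← hx', ← hy']
        fin_cases i <;> fin_cases j <;> simp_all [Sym2.eq_iff] <;>
          first | exact absurd hc (by decide) | tauto
      · rintro (h | h | h | h) <;> rw [Sym2.eq_iff] at h <;>
          rcases h with ⟨rfl, rfl⟩ | ⟨rfl, rfl⟩ <;>
          first
            | exact hadj 0 1 hd01 | exact (hadj 0 1 hd01).symm
            | exact hadj 1 2 hd12 | exact (hadj 1 2 hd12).symm
            | exact hadj 2 3 hd23 | exact (hadj 2 3 hd23).symm
            | exact hadj 3 0 hd30 | exact (hadj 3 0 hd30).symm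


end AuxC4

section MainAux

open Fin.NatCast in
lemma fin_n_eq_four' {n : ℕ} [NeZero n] (hn : 3 ≤ n) (u : Fin n)
    (h : u + 1 + 1 + 1 + 1 = u) : n = 4 := by
  apply fin_n_eq_four hn u
  have h4 : ((4:ℕ) : Fin n) = 1+1+1+1 := by push_cast; norm_num
  rw [h4, ← add_assoc, ← add_assoc, ← add_assoc]
  exact h

lemma cycle_c4 {n : ℕ} [NeZero n] (hn : 3 ≤ n) {a b c d : Fin n}
    (hac : a ≠ c) (hbd : b ≠ d)
    (hab : (cycleGraph n).Adj a b) (hbc : (cycleGraph n).Adj b c)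
    (hcd : (cycleGraph n).Adj c d) (hda : (cycleGraph n).Adj d a) :
    n = 4 ∧ ((b = a + 1 ∧ c = a+1+1 ∧ d = a+1+1+1) ∨
      (b = a - 1 ∧ c = a-1-1 ∧ d = a-1-1-1)) := by
  have hn2 : 2 ≤ n := by omega
  rw [cyc_adj_iff hn2] at hab hbc hcd hda
  rcases hab with rfl | rfl
  · rcases hbc with rfl | hc'
    · rcases hcd with rfl | hd'
      · rcases hda with ha' | ha'
        · exact ⟨fin_n_eq_four' hn a ha'.symm, Or.inl ⟨rfl, rfl, rfl⟩⟩
        · exact absurd (ha'.trans (add_sub_cancel_right _ _)) hac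
      · exact absurd (hd'.trans (add_sub_cancel_right _ _)).symm hbd
    · exact absurd (hc'.trans (add_sub_cancel_right _ _)).symm hac
  · rcases hbc with hc' | rfl
    · exact absurd (hc'.trans (sub_add_cancel _ _)).symm hac
    · rcases hcd with hd' | rfl
      · exact absurd (hd'.trans (sub_add_cancel _ _)).symm hbd
      · rcases hda with ha' | ha'
        · exact absurd (ha'.trans (sub_add_cancel _ _)) hac
        · refine ⟨?_, Or.inr ⟨rfl, rfl, rfl⟩⟩
          have h4 : a + 1 + 1 + 1 + 1 = a := by
            have := congrArg (fun x => x + 1 + 1 + 1 + 1) ha'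
            simpa [sub_add_cancel] using this
          exact fin_n_eq_four' hn a h4

variable {t : ℕ}

abbrev V0 (k : Fin t → ℕ) (q s : ℕ) :=
  ((Σ i, Fin (k i)) ⊕ ((Σ _ : Fin q, Fin 2) ⊕ Fin s))

abbrev vtx (k : Fin t → ℕ) (q s : ℕ) (i : Fin t) (j : Fin (k i)) : Option (V0 k q s) :=
  some (Sum.inl ⟨i, j⟩)

lemma vtx_inj (k : Fin t → ℕ) (q s : ℕ) (i : Fin t) :
    Function.Injective (vtx k q s i) := by
  intro u v h
  simpa [vtx] using h

lemma adj_vtx_vtx {k : Fin t → ℕ} {q s : ℕ} {i : Fin t} {u v : Fin (k i)}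
    (h : (cycleGraph (k i)).Adj u v) :
    (coneCycles k q s).Adj (vtx k q s i u) (vtx k q s i v) := ⟨i, u, v, rfl, rfl, h⟩

lemma adj_some_inl {k : Fin t → ℕ} {q s : ℕ} {i : Fin t} {u : Fin (k i)} {y : V0 k q s}
    (h : (coneCycles k q s).Adj (vtx k q s i u) (some y)) :
    ∃ v, y = Sum.inl ⟨i, v⟩ ∧ (cycleGraph (k i)).Adj u v := by
  cases y with
  | inl p =>
    obtain ⟨i', u', v', h1, h2, hadj⟩ := h
    injection h1 with hi hu
    subst hi
    have hu' := eq_of_heq hu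
    subst hu'
    exact ⟨v', by rw [h2], hadj⟩
  | inr p =>
    rcases p with p2 | x <;> simp [coneCycles, cone, SimpleGraph.sum_adj] at h

lemma adj_k2_unique {k : Fin t → ℕ} {q s : ℕ} {p : Σ _ : Fin q, Fin 2} {y z : V0 k q s}
    (hy : (coneCycles k q s).Adj (some (Sum.inr (Sum.inl p))) (some y))
    (hz : (coneCycles k q s).Adj (some (Sum.inr (Sum.inl p))) (some z)) : y = z := by
  obtain ⟨j, u, v, hp, rfl, huv⟩ :
      ∃ (j : Fin q) (u v : Fin 2), p = ⟨j, u⟩ ∧ y = Sum.inr (Sum.inl ⟨j, v⟩) ∧ u ≠ v := by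
    cases y with
    | inl _ => simp [coneCycles, cone, SimpleGraph.sum_adj] at hy
    | inr p' =>
      rcases p' with p2 | x
      · obtain ⟨j, u, v, h1, h2, huv⟩ := hy
        exact ⟨j, u, v, h1, by rw [h2], huv.ne⟩
      · simp [coneCycles, cone, SimpleGraph.sum_adj, K2s] at hy
  obtain ⟨j', u', v', hp', rfl, huv'⟩ :
      ∃ (j' : Fin q) (u' v' : Fin 2), p = ⟨j', u'⟩ ∧ z = Sum.inr (Sum.inl ⟨j', v'⟩) ∧ u' ≠ v' := by
    cases z with
    | inl _ => simp [coneCycles, cone, SimpleGraph.sum_adj] at hz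
    | inr p' =>
      rcases p' with p2 | x
      · obtain ⟨j, u, v, h1, h2, huv⟩ := hz
        exact ⟨j, u, v, h1, by rw [h2], huv.ne⟩
      · simp [coneCycles, cone, SimpleGraph.sum_adj, K2s] at hz
  rw [hp] at hp'
  injection hp' with hj hu
  subst hj
  subst hu
  have hv : v = v' := by
    have h1 : u ≠ v := huv
    have h2 : u ≠ v' := huv'
    have := u.isLt; have := v.isLt; have := v'.isLt
    apply Fin.ext
    have e1 : u.val ≠ v.val := fun h => h1 (Fin.ext h)
    have e2 : u.val ≠ v'.val := fun h => h2 (Fin.ext h)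
    omega
  rw [hv]

lemma two_nbrs {k : Fin t → ℕ} {q s : ℕ} (hk : ∀ i, 3 ≤ k i) {c₀ b₀ d₀ : V0 k q s}
    (h1 : (coneCycles k q s).Adj (some c₀) (some b₀))
    (h2 : (coneCycles k q s).Adj (some c₀) (some d₀)) (hbd : b₀ ≠ d₀) :
    ∃ (i : Fin t) (j : Fin (k i)),
      haveI : NeZero (k i) := ⟨by have := hk i; omega⟩
      c₀ = Sum.inl ⟨i, j⟩ ∧
      ((b₀ = Sum.inl ⟨i, j-1⟩ ∧ d₀ = Sum.inl ⟨i, j+1⟩) ∨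
       (b₀ = Sum.inl ⟨i, j+1⟩ ∧ d₀ = Sum.inl ⟨i, j-1⟩)) := by
  cases c₀ with
  | inl p =>
    obtain ⟨i, j⟩ := p
    haveI : NeZero (k i) := ⟨by have := hk i; omega⟩
    obtain ⟨vb, rfl, hb⟩ := adj_some_inl h1
    obtain ⟨vd, rfl, hd⟩ := adj_some_inl h2
    rw [cyc_adj_iff (by have := hk i; omega)] at hb hd
    refine ⟨i, j, rfl, ?_⟩
    rcases hb with rfl | rfl <;> rcases hd with rfl | rfl
    · exact absurd rfl hbd
    · exact Or.inr ⟨rfl, rfl⟩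
    · exact Or.inl ⟨rfl, rfl⟩
    · exact absurd rfl hbd
  | inr p =>
    rcases p with p2 | x
    · exact absurd (adj_k2_unique h1 h2) hbd
    · exfalso
      rcases b₀ with y | (y | y) <;> simp [coneCycles, cone, SimpleGraph.sum_adj] at h1

end MainAux

section MainAux2
variable {t : ℕ}

def fwd1 (k : Fin t → ℕ) (q s : ℕ) (hk : ∀ i, 3 ≤ k i) (i : Fin t) (j : Fin (k i)) :
    (coneCycles k q s).Subgraph :=
  haveI : NeZero (k i) := ⟨by have := hk i; omega⟩
  c4sub (coneCycles k q s) none (vtx k q s i (j-1)) (vtx k q s i j) (vtx k q s i (j+1))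
    trivial
    (adj_vtx_vtx ((cyc_adj_iff (by have := hk i; omega) _ _).2
      (Or.inl (sub_add_cancel j 1).symm)))
    (adj_vtx_vtx ((cyc_adj_iff (by have := hk i; omega) _ _).2 (Or.inl rfl)))
    trivial

def fwd2 (k : Fin t → ℕ) (q s : ℕ) (i : Fin t) (h4 : k i = 4) :
    (coneCycles k q s).Subgraph :=
  c4sub (coneCycles k q s) (vtx k q s i ⟨0, by omega⟩) (vtx k q s i ⟨1, by omega⟩)
    (vtx k q s i ⟨2, by omega⟩) (vtx k q s i ⟨3, by omega⟩)
    (adj_vtx_vtx (cyc_adj_mk h4).1)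
    (adj_vtx_vtx (cyc_adj_mk h4).2.1)
    (adj_vtx_vtx (cyc_adj_mk h4).2.2.1)
    (adj_vtx_vtx (cyc_adj_mk h4).2.2.2)

lemma fwd1_iso (k : Fin t → ℕ) (q s : ℕ) (hk : ∀ i, 3 ≤ k i) (i : Fin t) (j : Fin (k i)) :
    Nonempty ((fwd1 k q s hk i j).coe ≃g cycleGraph 4) := by
  haveI : NeZero (k i) := ⟨by have := hk i; omega⟩
  have h3 : 3 ≤ k i := hk i
  unfold fwd1
  apply iso_c4sub
  · simp [vtx]
  · simp [vtx]
  · simp [vtx]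
  · exact (vtx_inj k q s i).ne (fin_sub_one_ne (by omega) j)
  · exact (vtx_inj k q s i).ne (fin_add_ne_sub h3 j).symm
  · exact (vtx_inj k q s i).ne (fin_add_one_ne (by omega) j).symm

lemma fwd2_iso (k : Fin t → ℕ) (q s : ℕ) (i : Fin t) (h4 : k i = 4) :
    Nonempty ((fwd2 k q s i h4).coe ≃g cycleGraph 4) := by
  obtain ⟨d1, d2, d3, d4, d5, d6⟩ := mk_distinct h4
  unfold fwd2
  apply iso_c4sub
  · exact (vtx_inj k q s i).ne d1
  · exact (vtx_inj k q s i).ne d2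
  · exact (vtx_inj k q s i).ne d3
  · exact (vtx_inj k q s i).ne d4
  · exact (vtx_inj k q s i).ne d5
  · exact (vtx_inj k q s i).ne d6

def Fmap (k : Fin t → ℕ) (q s : ℕ) (hk : ∀ i, 3 ≤ k i) :
    ((Σ i : Fin t, Fin (k i)) ⊕ {i : Fin t // k i = 4}) →
      {H' : (coneCycles k q s).Subgraph // Nonempty (H'.coe ≃g cycleGraph 4)}
  | Sum.inl ⟨i, j⟩ => ⟨fwd1 k q s hk i j, fwd1_iso k q s hk i j⟩
  | Sum.inr ⟨i, h4⟩ => ⟨fwd2 k q s i h4, fwd2_iso k q s i h4⟩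

lemma fwd1_not_center (k : Fin t → ℕ) (q s : ℕ) (hk : ∀ i, 3 ≤ k i) (i : Fin t)
    (j : Fin (k i)) : ¬ (fwd1 k q s hk i j).Adj none (vtx k q s i j) := by
  haveI : NeZero (k i) := ⟨by have := hk i; omega⟩
  have h3 : 3 ≤ k i := hk i
  rintro (h | h | h | h) <;> rw [Sym2.eq_iff] at h <;>
    rcases h with ⟨h1, h2⟩ | ⟨h1, h2⟩ <;>
    first
      | exact absurd h1 (Option.some_ne_none _)
      | exact absurd h1.symm (Option.some_ne_none _)
      | exact fin_sub_one_ne (by omega : 2 ≤ k i) j (vtx_inj k q s i h2).symm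
      | exact fin_add_one_ne (by omega : 2 ≤ k i) j (vtx_inj k q s i h2).symm

lemma Fmap_inj (k : Fin t → ℕ) (q s : ℕ) (hk : ∀ i, 3 ≤ k i) :
    Function.Injective (Fmap k q s hk) := by
  rintro (⟨i, j⟩ | ⟨i, h4⟩) (⟨i', j'⟩ | ⟨i', h4'⟩) hEq <;>
    rw [Subtype.ext_iff] at hEq <;> simp only [Fmap] at hEq
  · -- fwd1 = fwd1
    haveI : NeZero (k i) := ⟨by have := hk i; omega⟩
    haveI : NeZero (k i') := ⟨by have := hk i'; omega⟩
    have hmem : (vtx k q s i j) ∈ (fwd1 k q s hk i' j').verts := by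
      rw [← hEq]; exact Or.inr (Or.inr (Or.inl rfl))
    rcases hmem with h | h | h | h
    · exact absurd h (by simp [vtx])
    · injection h with h
      injection h with h
      injection h with hi hj
      subst hi
      have hj := eq_of_heq hj
      exfalso
      apply fwd1_not_center k q s hk i j
      rw [hEq, hj]
      exact Or.inl rfl
    · injection h with h
      injection h with h
      injection h with hi hj
      subst hi
      rw [eq_of_heq hj]
    · injection h with h
      injection h with h
      injection h with hi hj
      subst hi
      have hj := eq_of_heq hj
      exfalso
      apply fwd1_not_center k q s hk i j
      rw [hEq, hj]
      exact Or.inr (Or.inr (Or.inr Sym2.eq_swap))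
  · -- fwd1 = fwd2 : impossible
    exfalso
    have hmem : (none : Option (V0 k q s)) ∈ (fwd1 k q s hk i j).verts := Or.inl rfl
    rw [hEq] at hmem
    rcases hmem with h | h | h | h <;> exact absurd h (by simp [vtx])
  · -- fwd2 = fwd1 : impossible
    exfalso
    have hmem : (none : Option (V0 k q s)) ∈ (fwd1 k q s hk i' j').verts := Or.inl rfl
    rw [← hEq] at hmem
    rcases hmem with h | h | h | h <;> exact absurd h (by simp [vtx])
  · -- fwd2 = fwd2
    have hmem : (vtx k q s i ⟨0, by omega⟩) ∈ (fwd2 k q s i' h4').verts := by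
      rw [← hEq]; exact Or.inl rfl
    rcases hmem with h | h | h | h <;>
      · injection h with h
        injection h with h
        injection h with hi hj
        subst hi
        rfl

lemma c4sub_chain_plus (k : Fin t → ℕ) (q s : ℕ) (hk : ∀ i, 3 ≤ k i) (i : Fin t)
    (h4i : k i = 4) [NeZero (k i)] (A : Fin (k i)) {b c d : Fin (k i)}
    (hb : b = A+1) (hc : c = A+1+1) (hd : d = A+1+1+1)
    (p1 : (coneCycles k q s).Adj (vtx k q s i A) (vtx k q s i b))
    (p2 : (coneCycles k q s).Adj (vtx k q s i b) (vtx k q s i c))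
    (p3 : (coneCycles k q s).Adj (vtx k q s i c) (vtx k q s i d))
    (p4 : (coneCycles k q s).Adj (vtx k q s i d) (vtx k q s i A)) :
    c4sub (coneCycles k q s) (vtx k q s i A) (vtx k q s i b) (vtx k q s i c)
      (vtx k q s i d) p1 p2 p3 p4 = fwd2 k q s i h4i := by
  haveI : NeZero (k i) := ⟨by omega⟩
  subst hb hc hd
  unfold fwd2
  apply c4sub_eq_of
  · exact quad_map (vtx_inj k q s i) (fin4_v_plus h4i A)
  · intro x y
    exact ⟨edge_map_aux (vtx_inj k q s i) (fun u v h => (fin4_e_plus h4i A u v).1 h) x y,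
      edge_map_aux (vtx_inj k q s i) (fun u v h => (fin4_e_plus h4i A u v).2 h) x y⟩

lemma c4sub_chain_minus (k : Fin t → ℕ) (q s : ℕ) (hk : ∀ i, 3 ≤ k i) (i : Fin t)
    (h4i : k i = 4) [NeZero (k i)] (A : Fin (k i)) {b c d : Fin (k i)}
    (hb : b = A-1) (hc : c = A-1-1) (hd : d = A-1-1-1)
    (p1 : (coneCycles k q s).Adj (vtx k q s i A) (vtx k q s i b))
    (p2 : (coneCycles k q s).Adj (vtx k q s i b) (vtx k q s i c))
    (p3 : (coneCycles k q s).Adj (vtx k q s i c) (vtx k q s i d))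
    (p4 : (coneCycles k q s).Adj (vtx k q s i d) (vtx k q s i A)) :
    c4sub (coneCycles k q s) (vtx k q s i A) (vtx k q s i b) (vtx k q s i c)
      (vtx k q s i d) p1 p2 p3 p4 = fwd2 k q s i h4i := by
  haveI : NeZero (k i) := ⟨by omega⟩
  subst hb hc hd
  unfold fwd2
  apply c4sub_eq_of
  · exact quad_map (vtx_inj k q s i) (fin4_v_minus h4i A)
  · intro x y
    exact ⟨edge_map_aux (vtx_inj k q s i) (fun u v h => (fin4_e_minus h4i A u v).1 h) x y,
      edge_map_aux (vtx_inj k q s i) (fun u v h => (fin4_e_minus h4i A u v).2 h) x y⟩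

lemma surj_base_core (k : Fin t → ℕ) (q s : ℕ) (hk : ∀ i, 3 ≤ k i) (i : Fin t)
    {ja jb jc jd : Fin (k i)} (hacF : ja ≠ jc) (hbdF : jb ≠ jd)
    (hab : (cycleGraph (k i)).Adj ja jb) (hbc : (cycleGraph (k i)).Adj jb jc)
    (hcd : (cycleGraph (k i)).Adj jc jd) (hda : (cycleGraph (k i)).Adj jd ja)
    (p1 : (coneCycles k q s).Adj (vtx k q s i ja) (vtx k q s i jb))
    (p2 : (coneCycles k q s).Adj (vtx k q s i jb) (vtx k q s i jc))
    (p3 : (coneCycles k q s).Adj (vtx k q s i jc) (vtx k q s i jd))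
    (p4 : (coneCycles k q s).Adj (vtx k q s i jd) (vtx k q s i ja)) :
    ∃ h4i : k i = 4,
      c4sub (coneCycles k q s) (vtx k q s i ja) (vtx k q s i jb) (vtx k q s i jc)
        (vtx k q s i jd) p1 p2 p3 p4 = fwd2 k q s i h4i := by
  haveI : NeZero (k i) := ⟨by have := hk i; omega⟩
  obtain ⟨h4i, hchain⟩ := cycle_c4 (hk i) hacF hbdF hab hbc hcd hda
  refine ⟨h4i, ?_⟩
  rcases hchain with ⟨hb, hc, hd⟩ | ⟨hb, hc, hd⟩
  · exact c4sub_chain_plus k q s hk i h4i ja hb hc hd p1 p2 p3 p4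
  · exact c4sub_chain_minus k q s hk i h4i ja hb hc hd p1 p2 p3 p4

end MainAux2

section MainAux3
variable {t : ℕ}

lemma surj_apex (k : Fin t → ℕ) (q s : ℕ) (hk : ∀ i, 3 ≤ k i) {b₀ c₀ d₀ : V0 k q s}
    (h1 : (coneCycles k q s).Adj none (some b₀))
    (h2 : (coneCycles k q s).Adj (some b₀) (some c₀))
    (h3 : (coneCycles k q s).Adj (some c₀) (some d₀))
    (h4 : (coneCycles k q s).Adj (some d₀) none)
    (hbd : b₀ ≠ d₀) :
    ∃ (i : Fin t) (j : Fin (k i)),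
      c4sub (coneCycles k q s) none (some b₀) (some c₀) (some d₀) h1 h2 h3 h4 =
        fwd1 k q s hk i j := by
  obtain ⟨i, j, rfl, hcase⟩ := two_nbrs hk h2.symm h3 hbd
  haveI : NeZero (k i) := ⟨by have := hk i; omega⟩
  have h3i : 3 ≤ k i := hk i
  rcases hcase with ⟨rfl, rfl⟩ | ⟨rfl, rfl⟩
  · exact ⟨i, j, rfl⟩
  · refine ⟨i, j, ?_⟩
    exact c4sub_rev h1 h2 h3 h4 trivial
      (adj_vtx_vtx ((cyc_adj_iff (by omega) _ _).2 (Or.inl (sub_add_cancel j 1).symm)))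
      (adj_vtx_vtx ((cyc_adj_iff (by omega) _ _).2 (Or.inl rfl)))
      trivial

lemma surj_base (k : Fin t → ℕ) (q s : ℕ) (hk : ∀ i, 3 ≤ k i) {a₀ b₀ c₀ d₀ : V0 k q s}
    (h1 : (coneCycles k q s).Adj (some a₀) (some b₀))
    (h2 : (coneCycles k q s).Adj (some b₀) (some c₀))
    (h3 : (coneCycles k q s).Adj (some c₀) (some d₀))
    (h4 : (coneCycles k q s).Adj (some d₀) (some a₀))
    (hac : a₀ ≠ c₀) (hbd : b₀ ≠ d₀) :
    ∃ (i : Fin t) (h4i : k i = 4),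
      c4sub (coneCycles k q s) (some a₀) (some b₀) (some c₀) (some d₀) h1 h2 h3 h4 =
        fwd2 k q s i h4i := by
  obtain ⟨i, jb, rfl, hcase⟩ := two_nbrs hk h1.symm h2 hac
  haveI : NeZero (k i) := ⟨by have := hk i; omega⟩
  have h3i : 3 ≤ k i := hk i
  rcases hcase with ⟨rfl, rfl⟩ | ⟨rfl, rfl⟩
  · -- a₀ = inl ⟨i, jb-1⟩, c₀ = inl ⟨i, jb+1⟩
    obtain ⟨jd, rfl, hcd'⟩ := adj_some_inl h3
    obtain ⟨v, hv, hda'⟩ := adj_some_inl h4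
    injection hv with hv
    injection hv with hv1 hv2
    subst hv2
    have hacF : jb - 1 ≠ jb + 1 := (fin_add_ne_sub h3i jb).symm
    have hbdF : jb ≠ jd := fun h => hbd (by rw [h])
    have hab' : (cycleGraph (k i)).Adj (jb-1) jb :=
      (cyc_adj_iff (by omega) _ _).2 (Or.inl (sub_add_cancel jb 1).symm)
    have hbc' : (cycleGraph (k i)).Adj jb (jb+1) :=
      (cyc_adj_iff (by omega) _ _).2 (Or.inl rfl)
    obtain ⟨h4i, heq⟩ := surj_base_core k q s hk i hacF hbdF hab' hbc' hcd' hda'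
      h1 h2 h3 h4
    exact ⟨i, h4i, heq⟩
  · -- a₀ = inl ⟨i, jb+1⟩, c₀ = inl ⟨i, jb-1⟩
    obtain ⟨jd, rfl, hcd'⟩ := adj_some_inl h3
    obtain ⟨v, hv, hda'⟩ := adj_some_inl h4
    injection hv with hv
    injection hv with hv1 hv2
    subst hv2
    have hacF : jb + 1 ≠ jb - 1 := fin_add_ne_sub h3i jb
    have hbdF : jb ≠ jd := fun h => hbd (by rw [h])
    have hab' : (cycleGraph (k i)).Adj (jb+1) jb :=
      (cyc_adj_iff (by omega) _ _).2 (Or.inr (add_sub_cancel_right jb 1).symm)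
    have hbc' : (cycleGraph (k i)).Adj jb (jb-1) :=
      (cyc_adj_iff (by omega) _ _).2 (Or.inr rfl)
    obtain ⟨h4i, heq⟩ := surj_base_core k q s hk i hacF hbdF hab' hbc' hcd' hda'
      h1 h2 h3 h4
    exact ⟨i, h4i, heq⟩

lemma Fmap_surj (k : Fin t → ℕ) (q s : ℕ) (hk : ∀ i, 3 ≤ k i) :
    Function.Surjective (Fmap k q s hk) := by
  rintro ⟨H', hne⟩
  obtain ⟨e⟩ := id hne
  obtain ⟨a, b, c, d, h1, h2, h3, h4, n1, n2, n3, n4, n5, n6, rfl⟩ := exists_c4 H' e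
  rcases a with _ | a₀
  · rcases b with _ | b₀
    · exact absurd rfl n1
    rcases c with _ | c₀
    · exact absurd rfl n2
    rcases d with _ | d₀
    · exact absurd rfl n3
    obtain ⟨i, j, heq⟩ := surj_apex k q s hk h1 h2 h3 h4
      (fun h => n5 (congrArg some h))
    exact ⟨Sum.inl ⟨i, j⟩, Subtype.ext heq.symm⟩
  · rcases b with _ | b₀
    · rcases c with _ | c₀
      · exact absurd rfl n4
      rcases d with _ | d₀
      · exact absurd rfl n5
      obtain ⟨i, j, heq⟩ := surj_apex k q s hk h2 h3 h4 h1
        (fun h => n2 (congrArg some h.symm))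
      exact ⟨Sum.inl ⟨i, j⟩,
        Subtype.ext (((c4sub_rot h1 h2 h3 h4).trans heq).symm)⟩
    · rcases c with _ | c₀
      · rcases d with _ | d₀
        · exact absurd rfl n6
        obtain ⟨i, j, heq⟩ := surj_apex k q s hk h3 h4 h1 h2
          (fun h => n5 (congrArg some h.symm))
        exact ⟨Sum.inl ⟨i, j⟩,
          Subtype.ext (((c4sub_rot h1 h2 h3 h4).trans
            ((c4sub_rot h2 h3 h4 h1).trans heq)).symm)⟩
      · rcases d with _ | d₀
        · obtain ⟨i, j, heq⟩ := surj_apex k q s hk h4 h1 h2 h3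
            (fun h => n2 (congrArg some h))
          exact ⟨Sum.inl ⟨i, j⟩,
            Subtype.ext (((c4sub_rot h1 h2 h3 h4).trans
              ((c4sub_rot h2 h3 h4 h1).trans
                ((c4sub_rot h3 h4 h1 h2).trans heq))).symm)⟩
        · obtain ⟨i, h4i, heq⟩ := surj_base k q s hk h1 h2 h3 h4
            (fun h => n2 (congrArg some h)) (fun h => n5 (congrArg some h))
          exact ⟨Sum.inr ⟨i, h4i⟩, Subtype.ext heq.symm⟩

lemma count_aux (k : Fin t → ℕ) (q s : ℕ) (hk : ∀ i, 3 ≤ k i) :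
    Nat.card {H' : (coneCycles k q s).Subgraph // Nonempty (H'.coe ≃g cycleGraph 4)} =
      (∑ i, k i) + (Finset.univ.filter fun i => k i = 4).card := by
  classical
  rw [← Nat.card_congr (Equiv.ofBijective _ ⟨Fmap_inj k q s hk, Fmap_surj k q s hk⟩)]
  rw [Nat.card_eq_fintype_card, Fintype.card_sum, Fintype.card_sigma]
  simp [Fintype.card_subtype]

end MainAux3

/-- Lemma 4.2 (ii): the number of subgraphs of `G = K₁ ∨ (C_{k₁} ∪ ⋯ ∪ C_{k_t} ∪ q K₂ ∪ s K₁)`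
isomorphic to `C₄` equals `n - 2q - s - 1 + |{i : k_i = 4}|`; in particular it equals
`n - 2q - s - 1` when no `k_i` equals `4`. -/
theorem subgraphCount_C4_coneCycles
    (t q s n : ℕ) (ht : 1 ≤ t) (hq : 1 ≤ q) (hs : 1 ≤ s)
    (k : Fin t → ℕ) (hk : ∀ i, 3 ≤ k i)
    (hn : n = Fintype.card (Option ((Σ i, Fin (k i)) ⊕ ((Σ _ : Fin q, Fin 2) ⊕ Fin s)))) :
    (subgraphCount (coneCycles k q s) (cycleGraph 4) : ℤ) =
      (n : ℤ) - 2 * (q : ℤ) - (s : ℤ) - 1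
        + ((Finset.univ.filter fun i => k i = 4).card : ℤ) ∧
    ((∀ i, k i ≠ 4) →
      (subgraphCount (coneCycles k q s) (cycleGraph 4) : ℤ) =
        (n : ℤ) - 2 * (q : ℤ) - (s : ℤ) - 1) := by
  classical
  have hcount : subgraphCount (coneCycles k q s) (cycleGraph 4) =
      (∑ i, k i) + (Finset.univ.filter fun i => k i = 4).card := count_aux k q s hk
  have hn' : n = (∑ i, k i) + (2 * q + s + 1) := by
    rw [hn]
    simp [Fintype.card_option, Fintype.card_sum, Fintype.card_sigma, mul_comm]
    ring
  have hmain : (subgraphCount (coneCycles k q s) (cycleGraph 4) : ℤ) =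
      (n : ℤ) - 2 * (q : ℤ) - (s : ℤ) - 1
        + ((Finset.univ.filter fun i => k i = 4).card : ℤ) := by
    rw [hcount, hn']
    push_cast
    ring
  refine ⟨hmain, fun hno => ?_⟩
  rw [hmain, Finset.filter_false_of_mem (fun i _ => hno i)]
  simp

end Paper
end
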